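/- arXiv:1401.6936 — 5 statements merged into one kernel-verified Lean document; each statement's English description precedes it below -/
import Mathlib

section
/- Let H be a finite graph with Γ(H) = k, where k ≥ 1. Then for every finite graph G, Γ(G[H]) = Γ(G[K_k]), where K_k is the complete graph on k vertices. -/
open SimpleGraph
open scoped Classical

/-- A greedy `k`-coloring of `G`: a partition of the vertex set into nonempty stable sets
`S 0, …, S (k-1)` such that for all `j < i`, every vertex of `S i` has a neighbor in `S j`. -/
def IsGreedyColoring {V : Type*} (G : SimpleGraph V) (k : ℕ) (S : Fin k → Set V) : Prop :=
  (∀ v : V, ∃! i, v ∈ S i) ∧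
  (∀ i, (S i).Nonempty) ∧
  (∀ i, ∀ v ∈ S i, ∀ w ∈ S i, ¬ G.Adj v w) ∧
  (∀ i j : Fin k, j < i → ∀ v ∈ S i, ∃ w ∈ S j, G.Adj v w)

/-- The Grundy number `Γ(G)`: the largest `k` such that `G` has a greedy `k`-coloring. -/
noncomputable def grundy {V : Type*} [Fintype V] (G : SimpleGraph V) : ℕ :=
  sSup {k | ∃ S : Fin k → Set V, IsGreedyColoring G k S}

/-- Lexicographic product `G[H]`: `(a,x)` adjacent to `(b,y)` iff `ab ∈ E(G)`,
or `a = b` and `xy ∈ E(H)`. -/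
def lexProd {α β : Type*} (G : SimpleGraph α) (H : SimpleGraph β) :
    SimpleGraph (α × β) where
  Adj x y := G.Adj x.1 y.1 ∨ (x.1 = y.1 ∧ H.Adj x.2 y.2)
  symm := ⟨fun _ _ h => by
    rcases h with h | ⟨h1, h2⟩
    · exact Or.inl (G.symm.symm _ _ h)
    · exact Or.inr ⟨h1.symm, H.symm.symm _ _ h2⟩⟩
  loopless := ⟨fun _ h => by
    rcases h with h | ⟨-, h2⟩
    · exact G.loopless.irrefl _ h
    · exact H.loopless.irrefl _ h2⟩

namespace GrundyAux

lemma card_le_of_greedy {V : Type*} [Fintype V] {G : SimpleGraph V} {m : ℕ}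
    {S : Fin m → Set V} (h : IsGreedyColoring G m S) : m ≤ Fintype.card V := by
  have hinj : Function.Injective (fun i : Fin m => (h.2.1 i).some) := by
    intro i j hij
    have hi : (h.2.1 i).some ∈ S i := (h.2.1 i).some_mem
    have hj : (h.2.1 j).some ∈ S j := (h.2.1 j).some_mem
    have hij' : (h.2.1 i).some = (h.2.1 j).some := hij
    rw [hij'] at hi
    obtain ⟨c, _, hu⟩ := h.1 ((h.2.1 j).some)
    exact (hu i hi).trans (hu j hj).symm
  simpa using Fintype.card_le_of_injective _ hinj

lemma bddAbove_grundySet {V : Type*} [Fintype V] (G : SimpleGraph V) :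
    BddAbove {k | ∃ S : Fin k → Set V, IsGreedyColoring G k S} := by
  refine ⟨Fintype.card V, fun k hk => ?_⟩
  obtain ⟨S, hS⟩ := hk
  exact card_le_of_greedy hS

lemma le_grundy {V : Type*} [Fintype V] {G : SimpleGraph V} {m : ℕ}
    {S : Fin m → Set V} (h : IsGreedyColoring G m S) : m ≤ grundy G :=
  le_csSup (bddAbove_grundySet G) ⟨S, h⟩

lemma exists_coloring_of_grundy_pos {V : Type*} [Fintype V] {G : SimpleGraph V}
    (h : 0 < grundy G) :
    ∃ S : Fin (grundy G) → Set V, IsGreedyColoring G (grundy G) S := by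
  have hne : {k | ∃ S : Fin k → Set V, IsGreedyColoring G k S}.Nonempty := by
    by_contra h'
    rw [Set.not_nonempty_iff_eq_empty] at h'
    have : grundy G = 0 := by rw [grundy, h']; exact csSup_empty
    omega
  exact Nat.sSup_mem hne (bddAbove_grundySet G)

structure Good {α : Type*} (G : SimpleGraph α) (C : α → Finset ℕ) (U : Finset ℕ) : Prop where
  subset : ∀ a, C a ⊆ U
  cover : ∀ i ∈ U, ∃ a, i ∈ C a
  disj : ∀ ⦃a b⦄, G.Adj a b → Disjoint (C a) (C b)
  grd : ∀ a, ∀ i ∈ C a, ∀ j ∈ U, j < i → j ∈ C a ∨ ∃ b, G.Adj a b ∧ j ∈ C b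

lemma extract {α β : Type*} [Fintype α] [Fintype β] (G : SimpleGraph α) (Hh : SimpleGraph β)
    {m : ℕ} {S : Fin m → Set (α × β)} (hS : IsGreedyColoring (lexProd G Hh) m S) :
    ∃ C : α → Finset ℕ, Good G C (Finset.range m) ∧
      ∀ a, ∃ T : Fin (C a).card → Set β, IsGreedyColoring Hh (C a).card T := by
  set C : α → Finset ℕ :=
    fun a => (Finset.univ.filter (fun j : Fin m => ∃ x, (a, x) ∈ S j)).image Fin.val with hC
  have memC : ∀ a i, i ∈ C a ↔ ∃ j : Fin m, (∃ x, (a, x) ∈ S j) ∧ (j : ℕ) = i := by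
    intro a i
    simp [hC, Finset.mem_image, Finset.mem_filter]
  have hsub : ∀ a, C a ⊆ Finset.range m := by
    intro a i hi
    obtain ⟨j, _, hj⟩ := (memC a i).1 hi
    simpa [Finset.mem_range, ← hj] using j.2
  refine ⟨C, ⟨hsub, ?_, ?_, ?_⟩, ?_⟩
  · -- cover
    intro i hi
    rw [Finset.mem_range] at hi
    obtain ⟨⟨a, x⟩, hx⟩ := hS.2.1 ⟨i, hi⟩
    exact ⟨a, (memC a i).2 ⟨⟨i, hi⟩, ⟨x, hx⟩, rfl⟩⟩
  · -- disj
    intro a b hadj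
    rw [Finset.disjoint_left]
    intro i hia hib
    obtain ⟨j, ⟨x, hx⟩, hj⟩ := (memC a i).1 hia
    obtain ⟨j', ⟨y, hy⟩, hj'⟩ := (memC b i).1 hib
    have : j = j' := Fin.ext (by omega)
    subst this
    exact hS.2.2.1 j (a, x) hx (b, y) hy (Or.inl hadj)
  · -- grd
    intro a i hia j hj hji
    rw [Finset.mem_range] at hj
    obtain ⟨ji, ⟨x, hx⟩, hjiv⟩ := (memC a i).1 hia
    have hlt : (⟨j, hj⟩ : Fin m) < ji := by
      rw [Fin.lt_def]; simp; omega
    obtain ⟨⟨b, y⟩, hy, hadj⟩ := hS.2.2.2 ji ⟨j, hj⟩ hlt (a, x) hx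
    rcases hadj with hG | ⟨heq, hHH⟩
    · exact Or.inr ⟨b, hG, (memC b j).2 ⟨⟨j, hj⟩, ⟨y, hy⟩, rfl⟩⟩
    · left
      refine (memC a j).2 ⟨⟨j, hj⟩, ⟨y, ?_⟩, rfl⟩
      have : b = a := heq.symm
      subst this; exact hy
  · -- per-copy colorings
    intro a
    set n := (C a).card with hn
    set e := (C a).orderIsoOfFin hn.symm with he
    have hlt : ∀ r : Fin n, ((e r : ℕ)) < m := by
      intro r
      have := hsub a (e r).2
      simpa [Finset.mem_range] using this
    set idx : Fin n → Fin m := fun r => ⟨(e r : ℕ), hlt r⟩ with hidx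
    have hwit : ∀ r : Fin n, ∃ x, (a, x) ∈ S (idx r) := by
      intro r
      obtain ⟨j, ⟨x, hx⟩, hj⟩ := (memC a _).1 (e r).2
      have : j = idx r := Fin.ext (by simp [hidx, hj])
      exact ⟨x, this ▸ hx⟩
    have hidxmem : ∀ j : Fin m, (∃ x, (a, x) ∈ S j) → ∃ r : Fin n, idx r = j := by
      intro j hx
      have hmem : (j : ℕ) ∈ C a := (memC a _).2 ⟨j, hx, rfl⟩
      refine ⟨e.symm ⟨(j : ℕ), hmem⟩, ?_⟩
      apply Fin.ext
      simp [hidx]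
    refine ⟨fun r => {x | (a, x) ∈ S (idx r)}, ?_, ?_, ?_, ?_⟩
    · intro x
      obtain ⟨j, hj, hju⟩ := hS.1 (a, x)
      obtain ⟨r, hr⟩ := hidxmem j ⟨x, hj⟩
      refine ⟨r, by simpa [hr] using hj, ?_⟩
      intro r' hr'
      have : idx r' = j := hju (idx r') hr'
      have hval : (e r' : ℕ) = (e r : ℕ) := by
        have h1 : (e r' : ℕ) = (j : ℕ) := congrArg Fin.val this
        have h2 : (e r : ℕ) = (j : ℕ) := congrArg Fin.val hr
        omega
      exact e.injective (Subtype.ext hval)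
    · intro r
      exact hwit r
    · intro r x hx y hy hadj
      exact hS.2.2.1 (idx r) (a, x) hx (a, y) hy (Or.inr ⟨rfl, hadj⟩)
    · intro r r' hlt' x hx
      have hltm : idx r' < idx r := by
        rw [Fin.lt_def]
        exact Subtype.coe_lt_coe.2 (e.lt_iff_lt.2 hlt')
      obtain ⟨⟨b, y⟩, hy, hadj⟩ := hS.2.2.2 (idx r) (idx r') hltm (a, x) hx
      rcases hadj with hG | ⟨heq, hHH⟩
      · exfalso
        obtain ⟨x', hx'⟩ := hwit r'
        exact hS.2.2.1 (idx r') (a, x') hx' (b, y) hy (Or.inl hG)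
      · have : b = a := heq.symm
        subst this
        exact ⟨y, hy, hHH⟩

lemma pad {α : Type*} [Fintype α] (G : SimpleGraph α) (k : ℕ) :
    ∀ (N : ℕ) (C : α → Finset ℕ) (U : Finset ℕ), Good G C U → (∀ a, (C a).card ≤ k) →
      (∑ a, (k - (C a).card)) ≤ N →
      ∃ (C' : α → Finset ℕ) (U' : Finset ℕ),
        Good G C' U' ∧ (∀ a, (C' a).card = k) ∧ U ⊆ U' := by
  intro N
  induction N with
  | zero =>
    intro C U hg hle hsum
    refine ⟨C, U, hg, fun a => ?_, subset_rfl⟩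
    have h0 : ∀ a ∈ Finset.univ, k - (C a).card = 0 :=
      (Finset.sum_eq_zero_iff).1 (Nat.le_zero.1 hsum)
    have := h0 a (Finset.mem_univ a)
    have := hle a
    omega
  | succ N ih =>
    intro C U hg hle hsum
    by_cases h0 : (∑ a, (k - (C a).card)) = 0
    · refine ⟨C, U, hg, fun a => ?_, subset_rfl⟩
      have h0' : ∀ a ∈ Finset.univ, k - (C a).card = 0 := (Finset.sum_eq_zero_iff).1 h0
      have := h0' a (Finset.mem_univ a)
      have := hle a
      omega
    · obtain ⟨a₀, -, ha₀⟩ := Finset.exists_ne_zero_of_sum_ne_zero h0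
      have hcard₀ : (C a₀).card < k := by omega
      set Dset : Finset ℕ :=
        U.filter (fun j => j ∈ C a₀ ∨ ∃ b, G.Adj a₀ b ∧ j ∈ C b) with hD
      -- helper to finish given a suitable new color t and new used set U1
      have main : ∀ (t : ℕ) (U1 : Finset ℕ), t ∉ C a₀ → U ⊆ U1 → insert t (C a₀) ⊆ U1 →
          (∀ i ∈ U1, ∃ a, i ∈ Function.update C a₀ (insert t (C a₀)) a) →
          (∀ b, G.Adj a₀ b → t ∉ C b) →
          (∀ j ∈ U1, j < t → j ∈ Dset) →
          (∀ a, ∀ i ∈ C a, ∀ j ∈ U1, j < i → j ∈ U) →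
          ∃ (C' : α → Finset ℕ) (U' : Finset ℕ),
            Good G C' U' ∧ (∀ a, (C' a).card = k) ∧ U ⊆ U' := by
        intro t U1 htC hUU1 hins hcov htN hdown hold
        set C1 := Function.update C a₀ (insert t (C a₀)) with hC1
        have hC1a : ∀ a, C1 a = if a = a₀ then insert t (C a₀) else C a := by
          intro a; simp [hC1, Function.update_apply]
        have hmono : ∀ a, C a ⊆ C1 a := by
          intro a
          rw [hC1a]
          split
          · next h => rw [h]; exact Finset.subset_insert _ _
          · exact subset_rfl
        have hgood1 : Good G C1 U1 := by
          refine ⟨?_, hcov, ?_, ?_⟩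
          · intro a
            rw [hC1a]
            split
            · exact hins
            · exact (hg.subset a).trans hUU1
          · intro a b hadj
            rw [Finset.disjoint_left]
            intro i hia hib
            rw [hC1a] at hia hib
            have hne : a ≠ b := G.ne_of_adj hadj
            by_cases ha : a = a₀
            · subst ha
              rw [if_pos rfl] at hia
              rw [if_neg (Ne.symm hne)] at hib
              rcases Finset.mem_insert.1 hia with h | h
              · exact htN b hadj (h ▸ hib)
              · exact (Finset.disjoint_left.1 (hg.disj hadj)) h hib
            · rw [if_neg ha] at hia
              by_cases hb : b = a₀
              · subst hb
                rw [if_pos rfl] at hib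
                rcases Finset.mem_insert.1 hib with h | h
                · exact htN a (G.symm.symm _ _ hadj) (h ▸ hia)
                · exact (Finset.disjoint_left.1 (hg.disj hadj)) hia h
              · rw [if_neg hb] at hib
                exact (Finset.disjoint_left.1 (hg.disj hadj)) hia hib
          · intro a i hia j hj hji
            have liftit : (j ∈ C a ∨ ∃ b, G.Adj a b ∧ j ∈ C b) →
                (j ∈ C1 a ∨ ∃ b, G.Adj a b ∧ j ∈ C1 b) := by
              rintro (h | ⟨b, hb, hjb⟩)
              · exact Or.inl (hmono a h)
              · exact Or.inr ⟨b, hb, hmono b hjb⟩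
            rw [hC1a] at hia
            by_cases ha : a = a₀
            · subst ha
              rw [if_pos rfl] at hia
              rcases Finset.mem_insert.1 hia with h | h
              · subst h
                have hjD := hdown j hj hji
                rw [hD, Finset.mem_filter] at hjD
                exact liftit hjD.2
              · exact liftit (hg.grd _ _ h _ (hold _ _ h _ hj hji) hji)
            · rw [if_neg ha] at hia
              exact liftit (hg.grd _ _ hia _ (hold _ _ hia _ hj hji) hji)
        have hle1 : ∀ a, (C1 a).card ≤ k := by
          intro a
          rw [hC1a]
          split
          · rw [Finset.card_insert_of_notMem htC]; omega
          · exact hle a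
        have hsum1 : (∑ a, (k - (C1 a).card)) ≤ N := by
          have hsplit : ∀ (D : α → Finset ℕ),
              (∑ a, (k - (D a).card)) =
                (∑ a ∈ Finset.univ.erase a₀, (k - (D a).card)) + (k - (D a₀).card) := by
            intro D
            rw [Finset.sum_erase_add _ _ (Finset.mem_univ a₀)]
          have heq : ∀ a ∈ Finset.univ.erase a₀, (k - (C1 a).card) = (k - (C a).card) := by
            intro a ha
            rw [hC1a, if_neg (Finset.ne_of_mem_erase ha)]
          have hc1 : (C1 a₀).card = (C a₀).card + 1 := by
            rw [hC1a, if_pos rfl, Finset.card_insert_of_notMem htC]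
          rw [hsplit C1, Finset.sum_congr rfl heq, hc1]
          rw [hsplit C] at hsum
          omega
        obtain ⟨C', U', hg', hcards, hsub'⟩ := ih C1 U1 hgood1 hle1 hsum1
        exact ⟨C', U', hg', hcards, hUU1.trans hsub'⟩
      by_cases hcase : (U \ Dset).Nonempty
      · set t := (U \ Dset).min' hcase with ht
        have htmem : t ∈ U \ Dset := (U \ Dset).min'_mem hcase
        have htU : t ∈ U := (Finset.mem_sdiff.1 htmem).1
        have htD : t ∉ Dset := (Finset.mem_sdiff.1 htmem).2
        have htC : t ∉ C a₀ := by
          intro h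
          exact htD (Finset.mem_filter.2 ⟨htU, Or.inl h⟩)
        have htN : ∀ b, G.Adj a₀ b → t ∉ C b := by
          intro b hb h
          exact htD (Finset.mem_filter.2 ⟨htU, Or.inr ⟨b, hb, h⟩⟩)
        refine main t U htC subset_rfl ?_ ?_ htN ?_ ?_
        · intro i hi
          rcases Finset.mem_insert.1 hi with h | h
          · exact h ▸ htU
          · exact hg.subset a₀ h
        · intro i hi
          rcases hg.cover i hi with ⟨a, ha⟩
          refine ⟨a, ?_⟩
          rw [Function.update_apply]
          split
          · exact Finset.mem_insert_of_mem (by next h => exact h ▸ ha)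
          · exact ha
        · intro j hj hjt
          by_contra hjD
          have : j ∈ U \ Dset := Finset.mem_sdiff.2 ⟨hj, hjD⟩
          have := (U \ Dset).min'_le j this
          omega
        · intro a i hi j hj hji
          exact hj
      · -- U ⊆ Dset, use a fresh top color
        have hUD : ∀ j ∈ U, j ∈ Dset := by
          intro j hj
          by_contra h
          exact hcase ⟨j, Finset.mem_sdiff.2 ⟨hj, h⟩⟩
        set t := U.sup id + 1 with ht
        have htop : ∀ j ∈ U, j < t := by
          intro j hj
          have h2 : id j ≤ U.sup id := Finset.le_sup hj
          simp only [id] at h2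
          omega
        have htU : t ∉ U := by
          intro h
          exact absurd rfl (Nat.ne_of_lt (htop t h))
        have htC : t ∉ C a₀ := fun h => htU (hg.subset a₀ h)
        refine main t (insert t U) htC (Finset.subset_insert _ _) ?_ ?_ ?_ ?_ ?_
        · intro i hi
          rcases Finset.mem_insert.1 hi with h | h
          · exact h ▸ Finset.mem_insert_self _ _
          · exact Finset.mem_insert_of_mem (hg.subset a₀ h)
        · intro i hi
          rcases Finset.mem_insert.1 hi with h | h
          · refine ⟨a₀, ?_⟩
            rw [Function.update_apply, if_pos rfl]
            exact h ▸ Finset.mem_insert_self _ _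
          · rcases hg.cover i h with ⟨a, ha⟩
            refine ⟨a, ?_⟩
            rw [Function.update_apply]
            split
            · next hh => exact Finset.mem_insert_of_mem (hh ▸ ha)
            · exact ha
        · intro b hb h
          exact htU (hg.subset b h)
        · intro j hj hjt
          rcases Finset.mem_insert.1 hj with h | h
          · omega
          · exact hUD j h
        · intro a i hi j hj hji
          rcases Finset.mem_insert.1 hj with h | h
          · exfalso
            have := htop i (hg.subset a hi)
            omega
          · exact h

lemma build {α β : Type*} [Fintype α] [Fintype β] (G : SimpleGraph α) (Hh : SimpleGraph β)
    {k : ℕ} {C : α → Finset ℕ} {U : Finset ℕ} (hg : Good G C U) (hcard : ∀ a, (C a).card = k)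
    {T : Fin k → Set β} (hT : IsGreedyColoring Hh k T) :
    ∃ S : Fin U.card → Set (α × β), IsGreedyColoring (lexProd G Hh) U.card S := by
  set eU := U.orderIsoOfFin rfl with heU
  set ea : ∀ a, Fin k ≃o {x // x ∈ C a} := fun a => (C a).orderIsoOfFin (hcard a) with hea
  set tc : β → Fin k := fun x => (hT.1 x).choose with htcdef
  have htc : ∀ x, x ∈ T (tc x) := fun x => (hT.1 x).choose_spec.1
  have htcu : ∀ x i, x ∈ T i → i = tc x := fun x i h => (hT.1 x).choose_spec.2 i h
  set col : α × β → Fin U.card :=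
    fun v => eU.symm ⟨(ea v.1 (tc v.2) : ℕ), hg.subset v.1 (ea v.1 (tc v.2)).2⟩ with hcol
  refine ⟨fun c => {v | col v = c}, ?_, ?_, ?_, ?_⟩
  · intro v
    exact ⟨col v, rfl, fun c hc => hc.symm⟩
  · intro c
    obtain ⟨a, ha⟩ := hg.cover (eU c : ℕ) (eU c).2
    set r := (ea a).symm ⟨(eU c : ℕ), ha⟩ with hr
    obtain ⟨x, hx⟩ := hT.2.1 r
    have htcx : tc x = r := (htcu x r hx).symm
    refine ⟨(a, x), ?_⟩
    have hval : (ea a (tc x) : ℕ) = (eU c : ℕ) := by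
      rw [htcx, hr]
      simp
    have h2 : (⟨(ea a (tc x) : ℕ), hg.subset a (ea a (tc x)).2⟩ : {x // x ∈ U}) = eU c :=
      Subtype.ext hval
    show col (a, x) = c
    exact (congrArg eU.symm h2).trans (eU.symm_apply_apply c)
  · rintro c ⟨a, x⟩ hx ⟨b, y⟩ hy hadj
    have hx' : col (a, x) = c := hx
    have hy' : col (b, y) = c := hy
    have hval : (ea a (tc x) : ℕ) = (ea b (tc y) : ℕ) := by
      have := hx'.trans hy'.symm
      rw [hcol] at this
      have h2 := eU.symm.injective this
      exact congrArg Subtype.val h2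
    rcases hadj with hG | ⟨heq, hHH⟩
    · exact (Finset.disjoint_left.1 (hg.disj hG)) (ea a (tc x)).2 (hval ▸ (ea b (tc y)).2)
    · simp only at heq
      subst heq
      have : tc x = tc y := (ea a).injective (Subtype.ext hval)
      exact hT.2.2.1 (tc x) x (htc x) y (this ▸ htc y) hHH
  · rintro c d hdc ⟨a, x⟩ hx
    have hx' : col (a, x) = c := hx
    set i : ℕ := (ea a (tc x) : ℕ) with hi
    have heUc : eU c = ⟨i, hg.subset a (ea a (tc x)).2⟩ := by
      rw [← hx', hcol]
      exact (eU.apply_symm_apply _)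
    set j : ℕ := (eU d : ℕ) with hj
    have hji : j < i := by
      have : eU d < eU c := eU.lt_iff_lt.2 hdc
      rw [heUc] at this
      exact Subtype.coe_lt_coe.2 this
    rcases hg.grd a i (ea a (tc x)).2 j (eU d).2 hji with hjC | ⟨b, hadj, hjb⟩
    · set r' := (ea a).symm ⟨j, hjC⟩ with hr'
      have hlt : r' < tc x := by
        have h1 : (ea a r' : ℕ) < (ea a (tc x) : ℕ) := by
          rw [hr']
          simpa using hji
        exact (ea a).lt_iff_lt.1 (Subtype.coe_lt_coe.1 h1)
      obtain ⟨y, hy, hHH⟩ := hT.2.2.2 (tc x) r' hlt x (htc x)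
      refine ⟨(a, y), ?_, Or.inr ⟨rfl, hHH⟩⟩
      have htcy : tc y = r' := (htcu y r' hy).symm
      have hvv : (⟨(ea a (tc y) : ℕ), hg.subset a (ea a (tc y)).2⟩ : {x // x ∈ U}) = eU d := by
        apply Subtype.ext
        rw [htcy, hr']
        simp [hj]
      show col (a, y) = d
      exact (congrArg eU.symm hvv).trans (eU.symm_apply_apply d)
    · set r' := (ea b).symm ⟨j, hjb⟩ with hr'
      obtain ⟨y, hy⟩ := hT.2.1 r'
      refine ⟨(b, y), ?_, Or.inl hadj⟩
      have htcy : tc y = r' := (htcu y r' hy).symm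
      have hvv : (⟨(ea b (tc y) : ℕ), hg.subset b (ea b (tc y)).2⟩ : {x // x ∈ U}) = eU d := by
        apply Subtype.ext
        rw [htcy, hr']
        simp [hj]
      show col (b, y) = d
      exact (congrArg eU.symm hvv).trans (eU.symm_apply_apply d)

lemma transfer {α β γ : Type*} [Fintype α] [Fintype β] [Fintype γ]
    (G : SimpleGraph α) (H1 : SimpleGraph β) (H2 : SimpleGraph γ) {k : ℕ}
    (h1 : ∀ (p : ℕ) (T : Fin p → Set β), IsGreedyColoring H1 p T → p ≤ k)
    (h2 : ∃ T : Fin k → Set γ, IsGreedyColoring H2 k T) :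
    grundy (lexProd G H1) ≤ grundy (lexProd G H2) := by
  by_cases hm : grundy (lexProd G H1) = 0
  · omega
  obtain ⟨S, hS⟩ := exists_coloring_of_grundy_pos (Nat.pos_of_ne_zero hm)
  obtain ⟨C, hgood, hcopy⟩ := extract G H1 hS
  have hle : ∀ a, (C a).card ≤ k := by
    intro a
    obtain ⟨T, hT⟩ := hcopy a
    exact h1 _ T hT
  obtain ⟨C', U', hg', hcards, hsub⟩ := pad G k (∑ a, (k - (C a).card)) C _ hgood hle le_rfl
  obtain ⟨T, hT⟩ := h2
  obtain ⟨S', hS'⟩ := build G H2 hg' hcards hT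
  have h3 : U'.card ≤ grundy (lexProd G H2) := le_grundy hS'
  have h4 : grundy (lexProd G H1) ≤ U'.card := by
    have := Finset.card_le_card hsub
    simpa using this
  omega

lemma top_greedy (k : ℕ) :
    IsGreedyColoring (⊤ : SimpleGraph (Fin k)) k (fun i => ({i} : Set (Fin k))) := by
  refine ⟨?_, ?_, ?_, ?_⟩
  · intro v
    exact ⟨v, rfl, fun i hi => hi.symm⟩
  · intro i
    exact ⟨i, rfl⟩
  · intro i v hv w hw hadj
    rw [Set.mem_singleton_iff] at hv hw
    subst hv; subst hw
    simp at hadj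
  · intro i j hji v hv
    rw [Set.mem_singleton_iff] at hv
    subst hv
    refine ⟨j, rfl, ?_⟩
    simp only [SimpleGraph.top_adj]
    exact Ne.symm (Fin.ne_of_lt hji)

end GrundyAux

/-- If `Γ(H) = k ≥ 1`, then for every finite graph `G`, `Γ(G[H]) = Γ(G[K_k])`. -/
theorem grundy_lexProd_eq_lexProd_complete {β : Type*} [Fintype β]
    (H : SimpleGraph β) (k : ℕ) (hk : 1 ≤ k) (hH : grundy H = k)
    {α : Type*} [Fintype α] (G : SimpleGraph α) :
    grundy (lexProd G H) = grundy (lexProd G (⊤ : SimpleGraph (Fin k))) := by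
  subst hH
  obtain ⟨TH, hTH⟩ := GrundyAux.exists_coloring_of_grundy_pos (by omega : 0 < grundy H)
  apply le_antisymm
  · refine GrundyAux.transfer G H (⊤ : SimpleGraph (Fin (grundy H))) (k := grundy H) ?_ ?_
    · intro p T hT
      exact GrundyAux.le_grundy hT
    · exact ⟨_, GrundyAux.top_greedy (grundy H)⟩
  · refine GrundyAux.transfer G (⊤ : SimpleGraph (Fin (grundy H))) H (k := grundy H) ?_ ?_
    · intro p T hT
      have := GrundyAux.card_le_of_greedy hT
      simpa using this
    · exact ⟨TH, hTH⟩
end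

section
/- Let k and n be positive integers. Then Γ(K_n □ K_k[S_n]) = n · k, where K_k[S_n] denotes the complete multipartite graph with k parts each of size n (i.e., the lexicographic product of the complete graph K_k with the edgeless graph S_n on n vertices). -/
open SimpleGraph

private lemma encode_lt {n k b r : ℕ} (hb : b < k) (hr : r < n) : b * n + r < n * k := by
  have h2 : (b + 1) * n ≤ k * n := Nat.mul_le_mul_right _ hb
  rw [add_mul, one_mul] at h2
  have h3 : k * n = n * k := mul_comm _ _
  omega

private lemma encode_eq {n b b' r r' : ℕ} (hr : r < n) (hr' : r' < n)
    (h : b * n + r = b' * n + r') : b = b' ∧ r = r' := by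
  have hbb : b = b' := by
    rcases lt_trichotomy b b' with h1 | h1 | h1
    · have h2 : (b + 1) * n ≤ b' * n := Nat.mul_le_mul_right _ h1
      rw [add_mul, one_mul] at h2; omega
    · exact h1
    · have h2 : (b' + 1) * n ≤ b * n := Nat.mul_le_mul_right _ h1
      rw [add_mul, one_mul] at h2; omega
  subst hbb
  exact ⟨rfl, by omega⟩

/-- For positive integers `k` and `n`, `Γ(K_n □ K_k[S_n]) = n · k`, where `K_k[S_n]`
is the complete multipartite graph with `k` parts of size `n`, realized as the
lexicographic product of `K_k` with the edgeless graph `S_n` on `n` vertices. -/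
theorem grundy_boxProd_complete_multipartite (k n : ℕ) (hk : 1 ≤ k) (hn : 1 ≤ n) :
    grundy ((⊤ : SimpleGraph (Fin n)).boxProd
      (lexProd (⊤ : SimpleGraph (Fin k)) (⊥ : SimpleGraph (Fin n)))) = n * k := by
  haveI : NeZero n := ⟨by omega⟩
  set G := ((⊤ : SimpleGraph (Fin n)).boxProd
      (lexProd (⊤ : SimpleGraph (Fin k)) (⊥ : SimpleGraph (Fin n)))) with hG
  have hGadj : ∀ x y : Fin n × Fin k × Fin n, G.Adj x y ↔
      ((x.1 ≠ y.1 ∧ x.2 = y.2) ∨ (x.1 = y.1 ∧ x.2.1 ≠ y.2.1)) := by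
    intro x y
    rw [hG, SimpleGraph.boxProd_adj]
    constructor
    · rintro (⟨h1, h2⟩ | ⟨h1, h2⟩)
      · exact Or.inl ⟨by simpa using h1, h2⟩
      · rcases h1 with h1 | ⟨-, h1⟩
        · exact Or.inr ⟨h2, by simpa using h1⟩
        · simp at h1
    · rintro (⟨h1, h2⟩ | ⟨h1, h2⟩)
      · exact Or.inl ⟨by simpa using h1, h2⟩
      · exact Or.inr ⟨Or.inl (by simpa using h2), h1⟩
  have hsac : ∀ x c : Fin n, x - c + c = x := fun x c => sub_add_cancel x c
  classical
  let f : Fin n × Fin k × Fin n → ℕ := fun v => v.2.1.val * n + (v.1 + v.2.2).val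
  have hf : ∀ v, f v < n * k := fun v => encode_lt v.2.1.isLt (Fin.isLt _)
  let S : Fin (n * k) → Set (Fin n × Fin k × Fin n) := fun i => {v | f v = i.val}
  have hkey : ∀ (i i' : Fin (n * k)), i ≠ i' → ∀ v, f v = i.val →
      ∃ w, f w = i'.val ∧ G.Adj v w := by
    rintro i i' hne ⟨a, b, c⟩ hv
    have hb' : i'.val / n < k := Nat.div_lt_of_lt_mul i'.isLt
    have hr' : i'.val % n < n := Nat.mod_lt _ (by omega)
    have hdm : (i'.val / n) * n + i'.val % n = i'.val := by
      rw [mul_comm]; exact Nat.div_add_mod _ _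
    have hv' : b.val * n + (a + c).val = i.val := hv
    by_cases hbb : b = (⟨i'.val / n, hb'⟩ : Fin k)
    · have hbv : b.val = i'.val / n := congrArg Fin.val hbb
      have hjj : i'.val % n ≠ (a + c).val := by
        intro h
        apply hne; apply Fin.ext
        rw [hbv] at hv'
        omega
      refine ⟨((⟨i'.val % n, hr'⟩ : Fin n) - c, b, c), ?_, ?_⟩
      · show b.val * n + (((⟨i'.val % n, hr'⟩ : Fin n) - c) + c).val = i'.val
        rw [hsac, hbv]
        exact hdm
      · rw [hGadj]
        left
        refine ⟨?_, rfl⟩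
        intro h
        have h' : a = (⟨i'.val % n, hr'⟩ : Fin n) - c := h
        have h2 : a + c = (⟨i'.val % n, hr'⟩ : Fin n) := by rw [h', hsac]
        exact hjj (congrArg Fin.val h2).symm
    · refine ⟨(a, ⟨i'.val / n, hb'⟩, (⟨i'.val % n, hr'⟩ : Fin n) - a), ?_, ?_⟩
      · show (i'.val / n) * n + (a + ((⟨i'.val % n, hr'⟩ : Fin n) - a)).val = i'.val
        rw [add_comm a, hsac]
        exact hdm
      · rw [hGadj]
        exact Or.inr ⟨rfl, fun h => hbb h⟩
  have hcol : IsGreedyColoring G (n * k) S := by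
    refine ⟨?_, ?_, ?_, ?_⟩
    · intro v
      exact ⟨⟨f v, hf v⟩, rfl, fun i hi => Fin.ext ((hi : f v = i.val)).symm⟩
    · intro i
      have hb : i.val / n < k := Nat.div_lt_of_lt_mul i.isLt
      have hr : i.val % n < n := Nat.mod_lt _ (by omega)
      refine ⟨(0, ⟨i.val / n, hb⟩, ⟨i.val % n, hr⟩), ?_⟩
      show (i.val / n) * n + ((0 : Fin n) + ⟨i.val % n, hr⟩).val = i.val
      rw [zero_add]
      rw [mul_comm]
      exact Nat.div_add_mod _ _
    · rintro i ⟨a, b, c⟩ hv ⟨x, y, z⟩ hw hadj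
      have h1 : b.val * n + (a + c).val = i.val := hv
      have h2 : y.val * n + (x + z).val = i.val := hw
      obtain ⟨hby, hsum⟩ := encode_eq (Fin.isLt _) (Fin.isLt _) (h1.trans h2.symm)
      rw [hGadj] at hadj
      rcases hadj with ⟨hne, heq⟩ | ⟨heq, hne⟩
      · rw [Prod.mk.injEq] at heq
        have hcz : c = z := heq.2
        have hax : a = x := by
          have hs : a + c = x + z := Fin.ext hsum
          rw [hcz] at hs
          exact add_right_cancel hs
        exact hne hax
      · exact hne (Fin.ext hby)
    · intro i j hji v hv
      obtain ⟨w, hw, hadj⟩ := hkey i j hji.ne' v hv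
      exact ⟨w, hw, hadj⟩
  have hub : ∀ m, (∃ T : Fin m → Set (Fin n × Fin k × Fin n), IsGreedyColoring G m T) →
      m ≤ n * k := by
    rintro m ⟨T, hU, hNe, hSt, hGr⟩
    rcases Nat.eq_zero_or_pos m with rfl | hm
    · exact Nat.zero_le _
    have hmt : m - 1 < m := by omega
    set t : Fin m := ⟨m - 1, hmt⟩ with ht
    obtain ⟨v, hv⟩ := hNe t
    have hch : ∀ j : Fin m, ∃ u, u ∈ T j ∧ (j ≠ t → G.Adj v u) := by
      intro j
      by_cases hj : j = t
      · exact ⟨v, hj ▸ hv, fun h => absurd hj h⟩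
      · have hlt : j < t := by
          rw [Fin.lt_def]
          have h1 := j.isLt
          have h2 : j.val ≠ m - 1 := fun h => hj (Fin.ext h)
          show j.val < m - 1
          omega
        obtain ⟨u, hu, hadj⟩ := hGr t j hlt v hv
        exact ⟨u, hu, fun _ => hadj⟩
    choose w hwT hwadj using hch
    let F : Fin m → Fin n × Fin k := fun j =>
      if j = t then (v.1, v.2.1)
      else if (w j).2.1 = v.2.1 then ((w j).1, (w j).2.1) else ((w j).2.2, (w j).2.1)
    have hFt : F t = (v.1, v.2.1) := if_pos rfl
    have hFnt : ∀ j, j ≠ t → F j =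
        if (w j).2.1 = v.2.1 then ((w j).1, (w j).2.1) else ((w j).2.2, (w j).2.1) :=
      fun j hj => if_neg hj
    have hc1 : ∀ j, j ≠ t → (w j).2.1 = v.2.1 → (w j).1 ≠ v.1 ∧ (w j).2.2 = v.2.2 := by
      intro j hj hy
      rcases (hGadj v (w j)).mp (hwadj j hj) with ⟨h1, h2⟩ | ⟨h1, h2⟩
      · rw [Prod.ext_iff] at h2
        exact ⟨fun h => h1 h.symm, h2.2.symm⟩
      · exact absurd hy.symm h2
    have hc2 : ∀ j, j ≠ t → (w j).2.1 ≠ v.2.1 → (w j).1 = v.1 := by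
      intro j hj hy
      rcases (hGadj v (w j)).mp (hwadj j hj) with ⟨h1, h2⟩ | ⟨h1, h2⟩
      · rw [Prod.ext_iff] at h2
        exact absurd h2.1.symm hy
      · exact h1.symm
    have hinj : Function.Injective F := by
      intro j1 j2 hF
      by_cases h1 : j1 = t <;> by_cases h2 : j2 = t
      · exact h1.trans h2.symm
      · exfalso
        rw [h1, hFt, hFnt j2 h2] at hF
        by_cases hy : (w j2).2.1 = v.2.1
        · rw [if_pos hy] at hF
          exact (hc1 j2 h2 hy).1 (Prod.ext_iff.mp hF).1.symm
        · rw [if_neg hy] at hF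
          exact hy (Prod.ext_iff.mp hF).2.symm
      · exfalso
        rw [h2, hFt, hFnt j1 h1] at hF
        by_cases hy : (w j1).2.1 = v.2.1
        · rw [if_pos hy] at hF
          exact (hc1 j1 h1 hy).1 (Prod.ext_iff.mp hF).1
        · rw [if_neg hy] at hF
          exact hy (Prod.ext_iff.mp hF).2
      · have hww : w j1 = w j2 := by
          rw [hFnt j1 h1, hFnt j2 h2] at hF
          by_cases hy1 : (w j1).2.1 = v.2.1 <;> by_cases hy2 : (w j2).2.1 = v.2.1
          · rw [if_pos hy1, if_pos hy2] at hF
            obtain ⟨hfst, hsnd⟩ := Prod.ext_iff.mp hF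
            exact Prod.ext hfst (Prod.ext hsnd
              ((hc1 j1 h1 hy1).2.trans (hc1 j2 h2 hy2).2.symm))
          · rw [if_pos hy1, if_neg hy2] at hF
            exact absurd (((Prod.ext_iff.mp hF).2).symm.trans hy1) hy2
          · rw [if_neg hy1, if_pos hy2] at hF
            exact absurd (((Prod.ext_iff.mp hF).2).trans hy2) hy1
          · rw [if_neg hy1, if_neg hy2] at hF
            obtain ⟨hz, hy⟩ := Prod.ext_iff.mp hF
            exact Prod.ext ((hc2 j1 h1 hy1).trans (hc2 j2 h2 hy2).symm)
              (Prod.ext hy hz)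
        exact ExistsUnique.unique (hU (w j1)) (hwT j1) (by rw [hww]; exact hwT j2)
    have hcard := Fintype.card_le_of_injective F hinj
    simpa [Fintype.card_prod] using hcard
  show sSup {m | ∃ S : Fin m → Set (Fin n × Fin k × Fin n), IsGreedyColoring G m S} = n * k
  apply le_antisymm
  · exact csSup_le ⟨n * k, S, hcol⟩ (fun m hm => hub m hm)
  · exact le_csSup ⟨n * k, fun m hm => hub m hm⟩ ⟨S, hcol⟩
end

section
/- Let G be a finite graph with at least one edge and let k ≥ 1 be an integer. Set n = Γ(G) + 2k − 2 and let K_k[S_n] be the complete multipartite graph with k parts each of size n. Then Γ(K_k[S_n] □ G) ≥ Γ(G) + 2k − 2. (In particular, since Γ(K_k[S_n]) = k, for every graph H with Γ(H) = k of this form, Γ(G □ H) ≥ Γ(G) + 2k − 2.) -/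
open SimpleGraph

def posB (g j i : ℕ) : ℕ :=
  if i = j then 0
  else if i = j + 1 then 1
  else if i = 1 then (if j = g then 1 else 2)
  else if i < j then i + 1 else i - 1

open Classical in
noncomputable def psiC {α : Type*} (G : SimpleGraph α) (c : α → ℕ) (k : ℕ) (v : α) : ℕ :=
  if ∀ w, ¬ G.Adj v w then k else c v + (2 * k - 2)

open Classical in
noncomputable def ffC {α : Type*} [Fintype α] (G : SimpleGraph α) (c : α → ℕ) (g k : ℕ)
    (p j : ℕ) (v : α) : ℕ :=
  if ∀ w, ¬ G.Adj v w then p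
  else sInf {x | 2 * p - 1 ≤ x ∧ x ≠ psiC G c k v ∧
      (∀ p' j', p < p' → p' < k → 1 ≤ j' → j' ≤ g → ffC G c g k p' j' v ≠ x) ∧
      (∀ w, G.Adj v w → posB g j (c w) < posB g j (c v) → ffC G c g k p j w ≠ x)}
termination_by (k - p, posB g j (c v))
decreasing_by
  · exact Prod.Lex.left _ _ (by omega)
  · exact Prod.Lex.right _ (by omega)

open Classical in
noncomputable def MxC {α : Type*} [Fintype α] (G : SimpleGraph α) (c : α → ℕ) (v : α) : ℕ :=
  (Finset.univ.filter fun w => G.Adj v w).sup c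

section PosB

lemma posB_self (g j : ℕ) : posB g j j = 0 := by unfold posB; simp

lemma posB_succ (g j : ℕ) : posB g j (j + 1) = 1 := by unfold posB; split_ifs <;> omega

lemma posB_zero {g j i : ℕ} (hi : 1 ≤ i) (h : posB g j i = 0) : i = j := by
  unfold posB at h; split_ifs at h <;> omega

lemma posB_one_ge {g j : ℕ} (hj : 2 ≤ j) : 1 ≤ posB g j 1 := by
  unfold posB; split_ifs <;> omega

lemma posB_lt_one_cases {g j i : ℕ} (hj2 : 2 ≤ j) (hjg : j ≤ g) (hi : 1 ≤ i) (hig : i ≤ g)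
    (h : posB g j i < posB g j 1) : i = j ∨ i = j + 1 := by
  unfold posB at h; split_ifs at h <;> omega

lemma posB_inj {g j i i' : ℕ} (hj : 1 ≤ j) (hjg : j ≤ g) (hi : 1 ≤ i) (hig : i ≤ g)
    (hi' : 1 ≤ i') (hig' : i' ≤ g) (h : posB g j i = posB g j i') : i = i' := by
  unfold posB at h; split_ifs at h <;> omega

end PosB

section FF
variable {α : Type*} [Fintype α] (G : SimpleGraph α) (c : α → ℕ) (g k : ℕ)

lemma psiC_iso {v : α} (h : ∀ w, ¬ G.Adj v w) : psiC G c k v = k := if_pos h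

lemma psiC_noniso {v : α} (h : ¬ ∀ w, ¬ G.Adj v w) : psiC G c k v = c v + (2 * k - 2) :=
  if_neg h

lemma ffC_iso {p j : ℕ} {v : α} (h : ∀ w, ¬ G.Adj v w) : ffC G c g k p j v = p := by
  rw [ffC]; simp [h]

lemma ffC_noniso {p j : ℕ} {v : α} (h : ¬ ∀ w, ¬ G.Adj v w) :
    ffC G c g k p j v = sInf {x | 2 * p - 1 ≤ x ∧ x ≠ psiC G c k v ∧
      (∀ p' j', p < p' → p' < k → 1 ≤ j' → j' ≤ g → ffC G c g k p' j' v ≠ x) ∧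
      (∀ w, G.Adj v w → posB g j (c w) < posB g j (c v) → ffC G c g k p j w ≠ x)} := by
  rw [ffC]; simp [h]

lemma ffC_set_nonempty (p j : ℕ) (v : α) :
    {x | 2 * p - 1 ≤ x ∧ x ≠ psiC G c k v ∧
      (∀ p' j', p < p' → p' < k → 1 ≤ j' → j' ≤ g → ffC G c g k p' j' v ≠ x) ∧
      (∀ w, G.Adj v w → posB g j (c w) < posB g j (c v) → ffC G c g k p j w ≠ x)}.Nonempty := by
  classical
  set T : Finset ℕ := insert (psiC G c k v)
      (((Finset.Ioo p k ×ˢ Finset.Icc 1 g).image (fun q => ffC G c g k q.1 q.2 v)) ∪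
        Finset.univ.image (fun w => ffC G c g k p j w)) with hT
  refine ⟨2 * p + T.sup id + 1, ?_, ?_, ?_, ?_⟩
  · omega
  · intro hx
    have : psiC G c k v ≤ T.sup id := Finset.le_sup (f := id) (Finset.mem_insert_self _ _)
    omega
  · intro p' j' h1 h2 h3 h4 hx
    have hm : ffC G c g k p' j' v ∈ T := by
      refine Finset.mem_insert_of_mem (Finset.mem_union_left _ ?_)
      exact Finset.mem_image.2
        ⟨(p', j'), by simp [Finset.mem_Ioo, Finset.mem_Icc, h1, h2, h3, h4], rfl⟩
    have : ffC G c g k p' j' v ≤ T.sup id := Finset.le_sup (f := id) hm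
    omega
  · intro w _ _ hx
    have hm : ffC G c g k p j w ∈ T := by
      refine Finset.mem_insert_of_mem (Finset.mem_union_right _ ?_)
      exact Finset.mem_image.2 ⟨w, Finset.mem_univ _, rfl⟩
    have : ffC G c g k p j w ≤ T.sup id := Finset.le_sup (f := id) hm
    omega

lemma ffC_spec {p j : ℕ} {v : α} (h : ¬ ∀ w, ¬ G.Adj v w) :
    2 * p - 1 ≤ ffC G c g k p j v ∧ ffC G c g k p j v ≠ psiC G c k v ∧
      (∀ p' j', p < p' → p' < k → 1 ≤ j' → j' ≤ g →
        ffC G c g k p' j' v ≠ ffC G c g k p j v) ∧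
      (∀ w, G.Adj v w → posB g j (c w) < posB g j (c v) →
        ffC G c g k p j w ≠ ffC G c g k p j v) := by
  have := Nat.sInf_mem (ffC_set_nonempty G c g k p j v)
  rw [← ffC_noniso G c g k h] at this
  exact this

lemma ffC_lb {p j : ℕ} {v : α} (h : ¬ ∀ w, ¬ G.Adj v w) : 2 * p - 1 ≤ ffC G c g k p j v :=
  (ffC_spec G c g k h).1

lemma ffC_min {p j : ℕ} {v : α} (h : ¬ ∀ w, ¬ G.Adj v w) {x : ℕ}
    (h1 : 2 * p - 1 ≤ x) (h2 : x < ffC G c g k p j v) :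
    x = psiC G c k v ∨
      (∃ p' j', p < p' ∧ p' < k ∧ 1 ≤ j' ∧ j' ≤ g ∧ ffC G c g k p' j' v = x) ∨
      (∃ w, G.Adj v w ∧ posB g j (c w) < posB g j (c v) ∧ ffC G c g k p j w = x) := by
  rw [ffC_noniso G c g k h] at h2
  have hx := Nat.notMem_of_lt_sInf h2
  by_contra hcon
  push_neg at hcon
  obtain ⟨ha, hb, hc⟩ := hcon
  exact hx ⟨h1, ha, hb, hc⟩

variable (hg : 2 ≤ g) (hk : 1 ≤ k)
  (hc1 : ∀ v, 1 ≤ c v ∧ c v ≤ g)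
  (hcp : ∀ v w, G.Adj v w → c v ≠ c w)
  (hcd : ∀ v i, 1 ≤ i → i < c v → ∃ w, G.Adj v w ∧ c w = i)

include hc1 hk in
lemma psiC_lb {v : α} (h : ¬ ∀ w, ¬ G.Adj v w) : 2 * k - 1 ≤ psiC G c k v := by
  rw [psiC_noniso G c k h]; have := hc1 v; omega

include hc1 hk in
lemma ffC_base {p j : ℕ} (hp : 1 ≤ p) (hpk : p < k) {v : α} (hnv : ¬ ∀ w, ¬ G.Adj v w)
    (hj : c v = j) : ffC G c g k p j v = 2 * p - 1 := by
  refine le_antisymm ?_ (ffC_lb G c g k hnv)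
  rw [ffC_noniso G c g k hnv]
  apply Nat.sInf_le
  refine ⟨le_rfl, ?_, ?_, ?_⟩
  · have := psiC_lb G c g k hk hc1 hnv; omega
  · intro p' j' hpp' _ _ _
    have := ffC_lb G c g k (p := p') (j := j') hnv; omega
  · intro w _ hpos
    rw [hj, posB_self] at hpos
    exact absurd hpos (Nat.not_lt_zero _)

include hc1 hk hcd in
lemma ffC_succ {p : ℕ} (hp : 1 ≤ p) (hpk : p < k) {v : α} (hnv : ¬ ∀ w, ¬ G.Adj v w)
    (h2 : 2 ≤ c v) : ffC G c g k p (c v - 1) v = 2 * p := by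
  obtain ⟨j, hj⟩ : ∃ j, c v = j + 1 := ⟨c v - 1, by omega⟩
  have hjj : c v - 1 = j := by omega
  rw [hjj]
  have hj1 : 1 ≤ j := by omega
  have hjg : j ≤ g := by have := hc1 v; omega
  obtain ⟨w₀, hw₀, hcw₀⟩ := hcd v j hj1 (by omega)
  have hw₀n : ¬ ∀ u, ¬ G.Adj w₀ u := fun hall => hall v (G.adj_symm hw₀)
  have hbase₀ : ffC G c g k p j w₀ = 2 * p - 1 := ffC_base G c g k hk hc1 hp hpk hw₀n hcw₀
  have hspec := ffC_spec G c g k (p := p) (j := j) hnv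
  have hposv : posB g j (c v) = 1 := by rw [hj, posB_succ]
  refine le_antisymm ?_ ?_
  · -- ≤ 2p
    rw [ffC_noniso G c g k hnv]
    apply Nat.sInf_le
    refine ⟨by omega, ?_, ?_, ?_⟩
    · have := psiC_lb G c g k hk hc1 hnv; omega
    · intro p' j' hpp' _ _ _
      have := ffC_lb G c g k (p := p') (j := j') hnv; omega
    · intro w hw hpos
      rw [hposv] at hpos
      have hcw : c w = j := posB_zero (g := g) (hc1 w).1 (by omega)
      have hwn : ¬ ∀ u, ¬ G.Adj w u := fun hall => hall v (G.adj_symm hw)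
      rw [ffC_base G c g k hk hc1 hp hpk hwn hcw]
      omega
  · -- ≥ 2p : the value cannot be 2p-1 because of w₀
    have hd := hspec.2.2.2 w₀ hw₀ (by rw [hcw₀, posB_self, hposv]; omega)
    rw [hbase₀] at hd
    have := hspec.1
    omega

include hc1 in
lemma MxC_exists {v : α} (h : ¬ ∀ w, ¬ G.Adj v w) :
    ∃ w, G.Adj v w ∧ c w = MxC G c v := by
  classical
  push_neg at h
  obtain ⟨w, hw⟩ := h
  have hne : (Finset.univ.filter fun u => G.Adj v u).Nonempty :=
    ⟨w, by simp [hw]⟩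
  obtain ⟨b, hb, hbe⟩ := Finset.exists_mem_eq_sup _ hne c
  simp only [Finset.mem_filter, Finset.mem_univ, true_and] at hb
  exact ⟨b, hb, by rw [MxC, hbe]⟩

lemma MxC_le {v w : α} (h : G.Adj v w) : c w ≤ MxC G c v := by
  classical
  exact Finset.le_sup (by simp [h])

include hc1 hcp in
lemma MxC_range {v : α} (hnv : ¬ ∀ w, ¬ G.Adj v w) (hcv : c v = 1) :
    2 ≤ MxC G c v ∧ MxC G c v ≤ g := by
  obtain ⟨w₀, hw₀, hcw₀⟩ := MxC_exists G c g hc1 hnv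
  have h1 := hc1 w₀
  have := hcp v w₀ hw₀
  omega

include hc1 hcp hk in
lemma ffC_one {p : ℕ} (hp : 1 ≤ p) (hpk : p < k) {v : α} (hnv : ¬ ∀ w, ¬ G.Adj v w)
    (hcv : c v = 1) : ffC G c g k p (MxC G c v) v = 2 * p := by
  set j := MxC G c v with hjdef
  obtain ⟨hj2, hjg⟩ := MxC_range G c g hc1 hcp hnv hcv
  obtain ⟨w₀, hw₀, hcw₀⟩ := MxC_exists G c g hc1 hnv
  have hw₀n : ¬ ∀ u, ¬ G.Adj w₀ u := fun hall => hall v (G.adj_symm hw₀)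
  have hbase₀ : ffC G c g k p j w₀ = 2 * p - 1 :=
    ffC_base G c g k hk hc1 hp hpk hw₀n hcw₀
  have hspec := ffC_spec G c g k (p := p) (j := j) hnv
  refine le_antisymm ?_ ?_
  · rw [ffC_noniso G c g k hnv]
    apply Nat.sInf_le
    refine ⟨by omega, ?_, ?_, ?_⟩
    · have := psiC_lb G c g k hk hc1 hnv; omega
    · intro p' j' hpp' _ _ _
      have := ffC_lb G c g k (p := p') (j := j') hnv; omega
    · intro w hw hpos
      rw [hcv] at hpos
      have hcases := posB_lt_one_cases hj2 hjg (hc1 w).1 (hc1 w).2 hpos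
      have hwn : ¬ ∀ u, ¬ G.Adj w u := fun hall => hall v (G.adj_symm hw)
      rcases hcases with hcw | hcw
      · rw [ffC_base G c g k hk hc1 hp hpk hwn hcw]; omega
      · exact absurd (MxC_le G c hw) (by omega)
  · have hd := hspec.2.2.2 w₀ hw₀
      (by rw [hcw₀, posB_self, hcv]; exact posB_one_ge hj2)
    rw [hbase₀] at hd
    have := hspec.1
    omega

include hc1 hcp hcd hk in
lemma ffC_pair {v : α} (hnv : ¬ ∀ w, ¬ G.Adj v w) {m : ℕ} (hm1 : 1 ≤ m)
    (hm2 : m ≤ 2 * k - 2) :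
    ∃ p' j', 1 ≤ p' ∧ p' < k ∧ 1 ≤ j' ∧ j' ≤ g ∧ (m = 2 * p' - 1 ∨ m = 2 * p') ∧
      ffC G c g k p' j' v = m := by
  rcases Nat.even_or_odd m with ⟨t, ht⟩ | ⟨t, ht⟩
  · -- m = 2t even
    have ht1 : 1 ≤ t := by omega
    have htk : t < k := by omega
    by_cases h2 : 2 ≤ c v
    · refine ⟨t, c v - 1, ht1, htk, by have := hc1 v; omega, by have := hc1 v; omega,
        Or.inr (by omega), ?_⟩
      rw [ffC_succ G c g k hk hc1 hcd ht1 htk hnv h2]; omega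
    · have hcv : c v = 1 := by have := hc1 v; omega
      obtain ⟨hj2, hjg⟩ := MxC_range G c g hc1 hcp hnv hcv
      refine ⟨t, MxC G c v, ht1, htk, by omega, hjg, Or.inr (by omega), ?_⟩
      rw [ffC_one G c g k hk hc1 hcp ht1 htk hnv hcv]; omega
  · -- m = 2t+1 odd
    have ht1 : 1 ≤ t + 1 := by omega
    have htk : t + 1 < k := by omega
    refine ⟨t + 1, c v, ht1, htk, (hc1 v).1, (hc1 v).2, Or.inl (by omega), ?_⟩
    rw [ffC_base G c g k hk hc1 ht1 htk hnv rfl]; omega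

end FF

section Exist
variable {α : Type*} [Fintype α]

lemma exists_greedy_on (G : SimpleGraph α) :
    ∀ W : Finset α, W.Nonempty → ∃ m, ∃ S : Fin m → Set α, 0 < m ∧
      (∀ v ∈ W, ∃! i, v ∈ S i) ∧ (∀ i, (S i).Nonempty) ∧ (∀ i, S i ⊆ ↑W) ∧
      (∀ i, ∀ v ∈ S i, ∀ w ∈ S i, ¬ G.Adj v w) ∧
      (∀ i j, j < i → ∀ v ∈ S i, ∃ w ∈ S j, G.Adj v w) := by
  intro W
  induction W using Finset.strongInduction with
  | _ W ih =>
    intro hW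
    classical
    set Fam : Set (Finset α) := {T | ↑T ⊆ ↑W ∧ T.Nonempty ∧ ∀ v ∈ T, ∀ w ∈ T, ¬ G.Adj v w}
      with hFam
    obtain ⟨a, ha⟩ := hW
    have hFne : Fam.Nonempty := by
      refine ⟨{a}, ?_, ⟨a, Finset.mem_singleton_self a⟩, ?_⟩
      · simp [ha]
      · intro v hv w hw
        rw [Finset.mem_singleton] at hv hw
        intro hadj
        rw [hv, hw] at hadj
        exact G.loopless.irrefl a hadj
    obtain ⟨T, hTmem, hTmax⟩ := Set.Finite.exists_maximalFor id Fam (Set.toFinite _) hFne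
    obtain ⟨hTW, hTne, hTind⟩ := hTmem
    simp only [id] at hTmax
    by_cases hempty : (W \ T).Nonempty
    · -- recurse
      have hTsubW : T ⊆ W := by exact_mod_cast hTW
      have hsub : W \ T ⊂ W := Finset.sdiff_ssubset hTsubW hTne
      obtain ⟨m, S', hm, hpart, hne, hsubW, hstab, hdom⟩ := ih _ hsub hempty
      refine ⟨m + 1, Fin.cons (↑T : Set α) S', by omega, ?_, ?_, ?_, ?_, ?_⟩
      · intro v hv
        by_cases hvT : v ∈ T
        · refine ⟨0, by simpa using hvT, ?_⟩
          intro i hi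
          induction i using Fin.cases with
          | zero => rfl
          | succ i' =>
            simp only [Fin.cons_succ] at hi
            have := hsubW i' hi
            rw [Finset.coe_sdiff] at this
            exact absurd hvT (by simpa using this.2)
        · obtain ⟨i', hi', hu⟩ := hpart v (Finset.mem_sdiff.2 ⟨hv, hvT⟩)
          refine ⟨i'.succ, by simpa using hi', ?_⟩
          intro i hi
          induction i using Fin.cases with
          | zero => exact absurd (by simpa using hi) hvT
          | succ i'' =>
            simp only [Fin.cons_succ] at hi
            exact congrArg Fin.succ (hu i'' hi)
      · intro i
        induction i using Fin.cases with
        | zero => exact ⟨hTne.choose, by simpa using hTne.choose_spec⟩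
        | succ i' => simpa using hne i'
      · intro i
        induction i using Fin.cases with
        | zero => simpa using hTW
        | succ i' =>
          simp only [Fin.cons_succ]
          refine (hsubW i').trans ?_
          rw [Finset.coe_sdiff]
          exact Set.diff_subset
      · intro i
        induction i using Fin.cases with
        | zero =>
          intro v hv w hw
          exact hTind v (by simpa using hv) w (by simpa using hw)
        | succ i' => simpa using hstab i'
      · intro i j hji v hv
        induction i using Fin.cases with
        | zero => exact absurd (Fin.lt_iff_val_lt_val.1 hji) (by simp)
        | succ i' =>
          induction j using Fin.cases with
          | zero =>
            -- v has a neighbour in T, by maximality of T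
            simp only [Fin.cons_succ] at hv
            simp only [Fin.cons_zero]
            have hvW' := hsubW i' hv
            rw [Finset.coe_sdiff] at hvW'
            have hvW : v ∈ W := by simpa using hvW'.1
            have hvT : v ∉ T := by simpa using hvW'.2
            by_contra hcon
            push_neg at hcon
            simp only [Finset.mem_coe] at hcon
            have hins : insert v T ∈ Fam := by
              refine ⟨?_, ⟨v, Finset.mem_insert_self _ _⟩, ?_⟩
              · intro u hu
                rcases Finset.mem_insert.1 (by exact_mod_cast hu) with h2 | h2
                · rw [h2]; exact_mod_cast hvW
                · exact hTW (Finset.mem_coe.2 h2)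
              · intro x hx y hy
                rcases Finset.mem_insert.1 hx with hx2 | hx2
                · rcases Finset.mem_insert.1 hy with hy2 | hy2
                  · rw [hx2, hy2]; exact G.loopless.irrefl v
                  · rw [hx2]; exact hcon y hy2
                · rcases Finset.mem_insert.1 hy with hy2 | hy2
                  · rw [hy2]; intro hadj; exact hcon x hx2 (G.adj_symm hadj)
                  · exact hTind x hx2 y hy2
            have heq := hTmax hins (Finset.subset_insert v T)
            apply hvT
            exact heq (Finset.mem_insert_self v T)
          | succ j' =>
            simp only [Fin.cons_succ] at hv ⊢
            exact hdom i' j' (by exact_mod_cast Fin.succ_lt_succ_iff.1 hji) v hv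
    · -- W ⊆ T : one class
      have hWT : ∀ v ∈ W, v ∈ T := by
        intro v hv
        by_contra h
        exact hempty ⟨v, Finset.mem_sdiff.2 ⟨hv, h⟩⟩
      refine ⟨1, fun _ => (↑T : Set α), one_pos, ?_, ?_, ?_, ?_, ?_⟩
      · intro v hv
        exact ⟨0, by simpa using hWT v hv, fun i _ => Subsingleton.elim _ _⟩
      · intro _; exact ⟨hTne.choose, by simpa using hTne.choose_spec⟩
      · intro _; exact hTW
      · intro _ v hv w hw
        exact hTind v (by simpa using hv) w (by simpa using hw)
      · intro i j hji
        exact absurd hji (by omega)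
  
lemma greedy_card_le (G : SimpleGraph α) {m : ℕ} {S : Fin m → Set α}
    (h : IsGreedyColoring G m S) : m ≤ Fintype.card α := by
  classical
  have hinj : Function.Injective (fun i => (h.2.1 i).choose) := by
    intro i i' he
    simp only at he
    obtain ⟨i₀, _, hu⟩ := h.1 ((h.2.1 i).choose)
    have h1 := hu i (h.2.1 i).choose_spec
    have h2 : (h.2.1 i).choose ∈ S i' := by rw [he]; exact (h.2.1 i').choose_spec
    exact h1.trans (hu i' h2).symm
  simpa using Fintype.card_le_of_injective _ hinj

lemma grundy_bddAbove (G : SimpleGraph α) :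
    BddAbove {m | ∃ S : Fin m → Set α, IsGreedyColoring G m S} :=
  ⟨Fintype.card α, fun _ ⟨_, hS⟩ => greedy_card_le G hS⟩

end Exist

/-- copy index of the `s`-th copy. -/
def jofN (g b : ℕ) : ℕ := if b < g then b + 1 else 1

noncomputable def PhiC {α : Type*} [Fintype α] (G : SimpleGraph α) (c : α → ℕ)
    (g k : ℕ) {n : ℕ} (x : (Fin k × Fin n) × α) : ℕ :=
  if (x.1.1 : ℕ) = k - 1 then psiC G c k x.2
  else ffC G c g k ((x.1.1 : ℕ) + 1) (jofN g (x.1.2 : ℕ)) x.2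

section Product
variable {α : Type*} [Fintype α]

theorem product_greedy (G : SimpleGraph α) (c : α → ℕ) (g k : ℕ)
    (hg : 2 ≤ g) (hk : 1 ≤ k)
    (hc1 : ∀ v, 1 ≤ c v ∧ c v ≤ g)
    (hcp : ∀ v w, G.Adj v w → c v ≠ c w)
    (hcd : ∀ v i, 1 ≤ i → i < c v → ∃ w, G.Adj v w ∧ c w = i)
    (htop : ∃ v, c v = g) (n : ℕ) (hn : g ≤ n) :
    ∃ N', g + (2 * k - 2) ≤ N' ∧ ∃ T : Fin N' → Set ((Fin k × Fin n) × α),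
      IsGreedyColoring ((lexProd (⊤ : SimpleGraph (Fin k))
        (⊥ : SimpleGraph (Fin n))).boxProd G) N' T := by
  classical
  set P := (lexProd (⊤ : SimpleGraph (Fin k)) (⊥ : SimpleGraph (Fin n))).boxProd G with hP
  set Φ : (Fin k × Fin n) × α → ℕ := PhiC G c g k with hΦdef
  -- adjacency characterization
  have hadj : ∀ x y : (Fin k × Fin n) × α,
      P.Adj x y ↔ ((x.1.1 ≠ y.1.1 ∧ x.2 = y.2) ∨ (x.1 = y.1 ∧ G.Adj x.2 y.2)) := by
    intro x y
    rw [hP, boxProd_adj]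
    have hlex : (lexProd (⊤ : SimpleGraph (Fin k)) (⊥ : SimpleGraph (Fin n))).Adj x.1 y.1 ↔
        ((⊤ : SimpleGraph (Fin k)).Adj x.1.1 y.1.1 ∨
          (x.1.1 = y.1.1 ∧ (⊥ : SimpleGraph (Fin n)).Adj x.1.2 y.1.2)) := Iff.rfl
    rw [hlex]
    simp only [top_adj, bot_adj, and_false, or_false]
    tauto
  have hnoniso_of_adj : ∀ {v w : α}, G.Adj v w → ¬ ∀ u, ¬ G.Adj v u := fun h hall => hall _ h
  have hjofb : ∀ b : ℕ, 1 ≤ jofN g b ∧ jofN g b ≤ g := by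
    intro b; unfold jofN; split_ifs <;> omega
  -- evaluation lemmas
  have hΦ_last : ∀ (q : Fin k) (s : Fin n) (v : α), (q : ℕ) = k - 1 →
      Φ ⟨⟨q, s⟩, v⟩ = psiC G c k v := fun q s v h => if_pos h
  have hΦ_not : ∀ (q : Fin k) (s : Fin n) (v : α), (q : ℕ) ≠ k - 1 →
      Φ ⟨⟨q, s⟩, v⟩ = ffC G c g k ((q : ℕ) + 1) (jofN g (s : ℕ)) v := fun q s v h => if_neg h
  -- stability lemmas
  have hffC_ne_psiC : ∀ (p j : ℕ), 1 ≤ p → p < k → ∀ v : α,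
      ffC G c g k p j v ≠ psiC G c k v := by
    intro p j hp hpk v
    by_cases hv : ∀ w, ¬ G.Adj v w
    · rw [ffC_iso G c g k hv, psiC_iso G c k hv]; omega
    · exact (ffC_spec G c g k hv).2.1
  have hffC_ne_ffC : ∀ (p j p' j' : ℕ), 1 ≤ p → p < p' → p' < k → 1 ≤ j' → j' ≤ g →
      ∀ v : α, ffC G c g k p j v ≠ ffC G c g k p' j' v := by
    intro p j p' j' hp hpp' hp'k hj'1 hj'g v
    by_cases hv : ∀ w, ¬ G.Adj v w
    · rw [ffC_iso G c g k hv, ffC_iso G c g k hv]; omega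
    · exact ((ffC_spec G c g k hv).2.2.1 p' j' hpp' hp'k hj'1 hj'g).symm
  -- properness
  have hproper : ∀ x y, P.Adj x y → Φ x ≠ Φ y := by
    intro x y hxy
    obtain ⟨⟨qx, sx⟩, vx⟩ := x
    obtain ⟨⟨qy, sy⟩, vy⟩ := y
    rw [hadj] at hxy
    have hqxl := qx.isLt
    have hqyl := qy.isLt
    rcases hxy with ⟨hq, hv⟩ | ⟨hq, hv⟩
    · -- different parts, same vertex of G
      simp only at hq hv
      subst hv
      have hqne : (qx : ℕ) ≠ (qy : ℕ) := fun h => hq (Fin.ext h)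
      by_cases hx1 : (qx : ℕ) = k - 1 <;> by_cases hy1 : (qy : ℕ) = k - 1
      · omega
      · rw [hΦ_last _ _ _ hx1, hΦ_not _ _ _ hy1]
        exact (hffC_ne_psiC ((qy : ℕ) + 1) _ (by omega) (by omega) vx).symm
      · rw [hΦ_not _ _ _ hx1, hΦ_last _ _ _ hy1]
        exact hffC_ne_psiC ((qx : ℕ) + 1) _ (by omega) (by omega) vx
      · rw [hΦ_not _ _ _ hx1, hΦ_not _ _ _ hy1]
        rcases Nat.lt_or_ge (qx : ℕ) (qy : ℕ) with hlt | hge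
        · exact hffC_ne_ffC _ _ _ _ (by omega) (by omega) (by omega)
            (hjofb (sy : ℕ)).1 (hjofb (sy : ℕ)).2 vx
        · exact (hffC_ne_ffC _ _ _ _ (by omega) (by omega) (by omega)
            (hjofb (sx : ℕ)).1 (hjofb (sx : ℕ)).2 vx).symm
    · -- same copy, adjacent vertices of G
      simp only at hq hv
      have hqq : qx = qy := congrArg Prod.fst hq
      have hss : sx = sy := congrArg Prod.snd hq
      subst hqq; subst hss
      have hnx : ¬ ∀ u, ¬ G.Adj vx u := hnoniso_of_adj hv
      have hny : ¬ ∀ u, ¬ G.Adj vy u := hnoniso_of_adj (G.adj_symm hv)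
      by_cases hx1 : (qx : ℕ) = k - 1
      · rw [hΦ_last _ _ _ hx1, hΦ_last _ _ _ hx1]
        rw [psiC_noniso G c k hnx, psiC_noniso G c k hny]
        have := hcp vx vy hv
        omega
      · rw [hΦ_not _ _ _ hx1, hΦ_not _ _ _ hx1]
        set j := jofN g (sx : ℕ) with hjdef
        have hposne : posB g j (c vx) ≠ posB g j (c vy) := by
          intro h
          exact hcp vx vy hv (posB_inj (hjofb (sx : ℕ)).1 (hjofb (sx : ℕ)).2
            (hc1 vx).1 (hc1 vx).2 (hc1 vy).1 (hc1 vy).2 h)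
        rcases Nat.lt_or_ge (posB g j (c vy)) (posB g j (c vx)) with hlt | hge
        · exact ((ffC_spec G c g k hnx).2.2.2 vy hv hlt).symm
        · exact (ffC_spec G c g k hny).2.2.2 vx (G.adj_symm hv) (by omega)
  -- domination
  have hdom : ∀ x (m : ℕ), 1 ≤ m → m < Φ x → ∃ y, P.Adj x y ∧ Φ y = m := by
    intro x m hm1 hm2
    obtain ⟨⟨q, s⟩, v⟩ := x
    have hql := q.isLt
    by_cases hviso : ∀ u, ¬ G.Adj v u
    · -- isolated vertex
      by_cases h1 : (q : ℕ) = k - 1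
      · rw [hΦ_last _ _ _ h1, psiC_iso G c k hviso] at hm2
        refine ⟨⟨⟨⟨m - 1, by omega⟩, s⟩, v⟩, ?_, ?_⟩
        · rw [hadj]
          exact Or.inl ⟨Fin.ne_of_val_ne (by simpa using by omega), rfl⟩
        · rw [hΦ_not _ _ _ (show ((⟨m - 1, by omega⟩ : Fin k) : ℕ) ≠ k - 1 by simpa using by omega),
            ffC_iso G c g k hviso]
          simpa using by omega
      · rw [hΦ_not _ _ _ h1, ffC_iso G c g k hviso] at hm2
        refine ⟨⟨⟨⟨m - 1, by omega⟩, s⟩, v⟩, ?_, ?_⟩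
        · rw [hadj]
          exact Or.inl ⟨Fin.ne_of_val_ne (by simpa using by omega), rfl⟩
        · rw [hΦ_not _ _ _ (show ((⟨m - 1, by omega⟩ : Fin k) : ℕ) ≠ k - 1 by simpa using by omega),
            ffC_iso G c g k hviso]
          simpa using by omega
    · -- non-isolated vertex
      by_cases h1 : (q : ℕ) = k - 1
      · rw [hΦ_last _ _ _ h1, psiC_noniso G c k hviso] at hm2
        by_cases hm : m ≤ 2 * k - 2
        · obtain ⟨p', j', hp'1, hp'k, hj'1, hj'g, hpar, hval⟩ :=
            ffC_pair G c g k hk hc1 hcp hcd hviso hm1 hm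
          refine ⟨⟨⟨⟨p' - 1, by omega⟩, ⟨j' - 1, by omega⟩⟩, v⟩, ?_, ?_⟩
          · rw [hadj]
            exact Or.inl ⟨Fin.ne_of_val_ne (by simpa using by omega), rfl⟩
          · rw [hΦ_not _ _ _ (show ((⟨p' - 1, by omega⟩ : Fin k) : ℕ) ≠ k - 1 by
              simpa using by omega)]
            have e1 : ((⟨p' - 1, by omega⟩ : Fin k) : ℕ) + 1 = p' := by simpa using by omega
            have e2 : jofN g ((⟨j' - 1, by omega⟩ : Fin n) : ℕ) = j' := by
              show jofN g (j' - 1) = j'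
              unfold jofN
              rw [if_pos (by omega)]
              omega
            rw [e1, e2, hval]
        · -- m ≥ 2k-1 : use a neighbour in a lower class, same copy
          have hc' : 1 ≤ m - (2 * k - 2) ∧ m - (2 * k - 2) < c v := by omega
          obtain ⟨w, hw, hcw⟩ := hcd v (m - (2 * k - 2)) hc'.1 hc'.2
          refine ⟨⟨⟨q, s⟩, w⟩, ?_, ?_⟩
          · rw [hadj]
            exact Or.inr ⟨rfl, hw⟩
          · rw [hΦ_last _ _ _ h1, psiC_noniso G c k (hnoniso_of_adj (G.adj_symm hw)), hcw]
            omega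
      · rw [hΦ_not _ _ _ h1] at hm2
        set p := (q : ℕ) + 1 with hpdef
        have hpk : p < k := by omega
        by_cases hm : m ≤ 2 * p - 2
        · obtain ⟨p', j', hp'1, hp'k, hj'1, hj'g, hpar, hval⟩ :=
            ffC_pair G c g k hk hc1 hcp hcd hviso hm1 (by omega)
          refine ⟨⟨⟨⟨p' - 1, by omega⟩, ⟨j' - 1, by omega⟩⟩, v⟩, ?_, ?_⟩
          · rw [hadj]
            exact Or.inl ⟨Fin.ne_of_val_ne (by simpa using by omega), rfl⟩
          · rw [hΦ_not _ _ _ (show ((⟨p' - 1, by omega⟩ : Fin k) : ℕ) ≠ k - 1 by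
              simpa using by omega)]
            have e1 : ((⟨p' - 1, by omega⟩ : Fin k) : ℕ) + 1 = p' := by simpa using by omega
            have e2 : jofN g ((⟨j' - 1, by omega⟩ : Fin n) : ℕ) = j' := by
              show jofN g (j' - 1) = j'
              unfold jofN
              rw [if_pos (by omega)]
              omega
            rw [e1, e2, hval]
        · -- m ≥ 2p-1 : use minimality of the first-fit value
          rcases ffC_min G c g k hviso (by omega) hm2 with hcase | ⟨p', j', hpp', hp'k, hj'1, hj'g, hval⟩ | ⟨w, hw, hpos, hval⟩
          · -- m is the colour of v in the last part
            refine ⟨⟨⟨⟨k - 1, by omega⟩, s⟩, v⟩, ?_, ?_⟩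
            · rw [hadj]
              exact Or.inl ⟨Fin.ne_of_val_ne (by simpa using by omega), rfl⟩
            · rw [hΦ_last _ _ _ (by simpa using by omega)]
              omega
          · -- m is the colour of v in a later non-last part
            refine ⟨⟨⟨⟨p' - 1, by omega⟩, ⟨j' - 1, by omega⟩⟩, v⟩, ?_, ?_⟩
            · rw [hadj]
              exact Or.inl ⟨Fin.ne_of_val_ne (by simpa using by omega), rfl⟩
            · rw [hΦ_not _ _ _ (show ((⟨p' - 1, by omega⟩ : Fin k) : ℕ) ≠ k - 1 by
                simpa using by omega)]
              have e1 : ((⟨p' - 1, by omega⟩ : Fin k) : ℕ) + 1 = p' := by simpa using by omega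
              have e2 : jofN g ((⟨j' - 1, by omega⟩ : Fin n) : ℕ) = j' := by
                show jofN g (j' - 1) = j'
                unfold jofN
                rw [if_pos (by omega)]
                omega
              rw [e1, e2, hval]
          · -- m is the colour of an earlier neighbour in the same copy
            refine ⟨⟨⟨q, s⟩, w⟩, ?_, ?_⟩
            · rw [hadj]
              exact Or.inr ⟨rfl, hw⟩
            · rw [hΦ_not _ _ _ h1]
              exact hval
  -- positivity
  have hΦ1 : ∀ x, 1 ≤ Φ x := by
    intro x
    obtain ⟨⟨q, s⟩, v⟩ := x
    by_cases h1 : (q : ℕ) = k - 1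
    · rw [hΦ_last _ _ _ h1]
      by_cases hv : ∀ u, ¬ G.Adj v u
      · rw [psiC_iso G c k hv]; omega
      · rw [psiC_noniso G c k hv]; have := hc1 v; omega
    · rw [hΦ_not _ _ _ h1]
      by_cases hv : ∀ u, ¬ G.Adj v u
      · rw [ffC_iso G c g k hv]; omega
      · have := ffC_lb G c g k (p := (q : ℕ) + 1) (j := jofN g (s : ℕ)) hv; omega
  -- the top colour is attained
  obtain ⟨vg, hvg⟩ := htop
  have hvgn : ¬ ∀ u, ¬ G.Adj vg u := by
    intro hall
    obtain ⟨w, hw, _⟩ := hcd vg 1 le_rfl (by omega)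
    exact hall w hw
  set x₀ : (Fin k × Fin n) × α := ⟨⟨⟨k - 1, by omega⟩, ⟨0, by omega⟩⟩, vg⟩ with hx₀def
  have hx₀ : Φ x₀ = g + (2 * k - 2) := by
    rw [hΦ_last _ _ _ (by simp), psiC_noniso G c k hvgn, hvg]
  set N' := Finset.univ.sup Φ with hN'def
  have hN'le : ∀ x, Φ x ≤ N' := fun x => Finset.le_sup (Finset.mem_univ x)
  have hN'ge : g + (2 * k - 2) ≤ N' := hx₀ ▸ hN'le x₀
  haveI : Nonempty ((Fin k × Fin n) × α) := ⟨x₀⟩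
  obtain ⟨xM, _, hxM⟩ := Finset.exists_mem_eq_sup Finset.univ
    (Finset.univ_nonempty (α := (Fin k × Fin n) × α)) Φ
  have hxM' : N' = Φ xM := by rw [hN'def]; exact hxM
  refine ⟨N', hN'ge, fun i => {x | Φ x = (i : ℕ) + 1}, ?_, ?_, ?_, ?_⟩
  · -- partition
    intro x
    refine ⟨⟨Φ x - 1, by have := hN'le x; have := hΦ1 x; omega⟩, ?_, ?_⟩
    · show Φ x = (Φ x - 1) + 1
      have := hΦ1 x; omega
    · intro i hi
      have hi' : Φ x = (i : ℕ) + 1 := hi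
      apply Fin.ext
      show (i : ℕ) = Φ x - 1
      omega
  · -- every class nonempty
    intro i
    have hi1 : (i : ℕ) + 1 ≤ N' := i.isLt
    rcases eq_or_lt_of_le hi1 with he | hlt
    · exact ⟨xM, by show Φ xM = (i : ℕ) + 1; omega⟩
    · obtain ⟨y, _, hy⟩ := hdom xM ((i : ℕ) + 1) (by omega) (by omega)
      exact ⟨y, hy⟩
  · -- stability
    intro i x hx y hy hxy
    have hx' : Φ x = (i : ℕ) + 1 := hx
    have hy' : Φ y = (i : ℕ) + 1 := hy
    exact hproper x y hxy (by omega)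
  · -- greedy domination
    intro i j hji x hx
    have hx' : Φ x = (i : ℕ) + 1 := hx
    have hji' : (j : ℕ) < (i : ℕ) := hji
    obtain ⟨y, hadj', hy⟩ := hdom x ((j : ℕ) + 1) (by omega) (by omega)
    exact ⟨y, hy, hadj'⟩

end Product


/-- Let `G` be a finite graph with at least one edge, `k ≥ 1`, and
`n = Γ(G) + 2k − 2`.  Then `Γ(K_k[S_n] □ G) ≥ Γ(G) + 2k − 2`, where `K_k[S_n]` is the
complete multipartite graph with `k` parts of size `n`. -/
theorem grundy_boxProd_multipartite_ge {α : Type*} [Fintype α]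
    (G : SimpleGraph α) (hG : ∃ u v, G.Adj u v) (k : ℕ) (hk : 1 ≤ k) :
    grundy ((lexProd (⊤ : SimpleGraph (Fin k))
        (⊥ : SimpleGraph (Fin (grundy G + 2 * k - 2)))).boxProd G)
      ≥ grundy G + 2 * k - 2 := by
  classical
  have hbdd := grundy_bddAbove G
  have hne : {m | ∃ S : Fin m → Set α, IsGreedyColoring G m S}.Nonempty := by
    have hα : Nonempty α := ⟨hG.choose⟩
    obtain ⟨m, S, hm, h1, h2, h3, h4, h5⟩ := exists_greedy_on G Finset.univ Finset.univ_nonempty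
    exact ⟨m, S, fun v => h1 v (Finset.mem_univ v), h2, h4, h5⟩
  set g := grundy G with hgdef
  have hmem : ∃ S : Fin g → Set α, IsGreedyColoring G g S := Nat.sSup_mem hne hbdd
  obtain ⟨S, hS1, hS2, hS3, hS4⟩ := hmem
  choose cIdx hcIdx using fun v => (hS1 v).exists
  have huniq : ∀ v i, v ∈ S i → cIdx v = i := fun v i hi => (hS1 v).unique (hcIdx v) hi
  set c : α → ℕ := fun v => (cIdx v : ℕ) + 1 with hcdef
  have hcval : ∀ v, c v = (cIdx v : ℕ) + 1 := fun v => rfl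
  have hc1 : ∀ v, 1 ≤ c v ∧ c v ≤ g := by
    intro v
    have := (cIdx v).isLt
    rw [hcval]
    omega
  have hcp : ∀ v w, G.Adj v w → c v ≠ c w := by
    intro v w hvw he
    rw [hcval, hcval] at he
    have heq : cIdx v = cIdx w := Fin.ext (by omega)
    exact hS3 (cIdx v) v (hcIdx v) w (heq ▸ hcIdx w) hvw
  have hcd : ∀ v i, 1 ≤ i → i < c v → ∃ w, G.Adj v w ∧ c w = i := by
    intro v i h1 h2
    rw [hcval] at h2
    have hig : i - 1 < g := by have := (cIdx v).isLt; omega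
    obtain ⟨w, hw, hadjw⟩ := hS4 (cIdx v) ⟨i - 1, hig⟩
      (by rw [Fin.lt_iff_val_lt_val]; exact (by omega : i - 1 < (cIdx v : ℕ))) v (hcIdx v)
    refine ⟨w, hadjw, ?_⟩
    have hwi := huniq w _ hw
    rw [hcval, hwi]
    show i - 1 + 1 = i
    omega
  have hg2 : 2 ≤ g := by
    obtain ⟨u, v, huv⟩ := hG
    have h1 := hcp u v huv
    have h2 := hc1 u
    have h3 := hc1 v
    omega
  have htop : ∃ v, c v = g := by
    have hg0 : 0 < g := by omega
    obtain ⟨v, hv⟩ := hS2 ⟨g - 1, by omega⟩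
    refine ⟨v, ?_⟩
    have hvi := huniq v _ hv
    rw [hcval, hvi]
    show g - 1 + 1 = g
    omega
  obtain ⟨N', hge, T, hT⟩ := product_greedy G c g k hg2 hk hc1 hcp hcd htop
    (g + 2 * k - 2) (by omega)
  have hle : N' ≤ grundy ((lexProd (⊤ : SimpleGraph (Fin k))
      (⊥ : SimpleGraph (Fin (g + 2 * k - 2)))).boxProd G) :=
    le_csSup (grundy_bddAbove _) ⟨T, hT⟩
  omega
end

section
/- For every integer k ≥ 2: (i) Γ(K_k × K_2) = k, and (ii) for all finite graphs G and H with Γ(G) = k and Γ(H) = 2, Γ(G × H) ≥ k. Consequently min{Γ(G × H) : Γ(G) = k and Γ(H) = 2} = k. -/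
open SimpleGraph

/-- Direct (tensor) product `G × H`: `(a,x)` adjacent to `(b,y)` iff
`ab ∈ E(G)` and `xy ∈ E(H)`. -/
def tensorProd {α β : Type*} (G : SimpleGraph α) (H : SimpleGraph β) :
    SimpleGraph (α × β) where
  Adj x y := G.Adj x.1 y.1 ∧ H.Adj x.2 y.2
  symm := ⟨fun _ _ h => ⟨G.adj_symm h.1, H.adj_symm h.2⟩⟩
  loopless := ⟨fun _ h => G.loopless.irrefl _ h.1⟩

lemma greedy_le_card {V : Type*} [Fintype V] {G : SimpleGraph V} {k : ℕ} {S : Fin k → Set V}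
    (h : IsGreedyColoring G k S) : k ≤ Fintype.card V := by
  obtain ⟨hpart, hne, -, -⟩ := h
  have hinj : Function.Injective (fun i : Fin k => (hne i).choose) := by
    intro i j hij
    simp only at hij
    have hi := (hne i).choose_spec
    have hj := (hne j).choose_spec
    rw [hij] at hi
    obtain ⟨i₀, -, huniq⟩ := hpart (hne j).choose
    exact (huniq i hi).trans (huniq j hj).symm
  simpa using Fintype.card_le_of_injective _ hinj

lemma greedy_bddAbove {V : Type*} [Fintype V] (G : SimpleGraph V) :
    BddAbove {k | ∃ S : Fin k → Set V, IsGreedyColoring G k S} :=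
  ⟨Fintype.card V, fun _ ⟨_, hS⟩ => greedy_le_card hS⟩

lemma exists_of_grundy {V : Type*} [Fintype V] {G : SimpleGraph V} {k : ℕ}
    (h : grundy G = k) (hk : 0 < k) : ∃ S : Fin k → Set V, IsGreedyColoring G k S := by
  have hne : {m | ∃ S : Fin m → Set V, IsGreedyColoring G m S}.Nonempty := by
    by_contra hc
    rw [Set.not_nonempty_iff_eq_empty] at hc
    rw [grundy, hc] at h
    simp at h
    omega
  have hmem := Nat.sSup_mem hne (greedy_bddAbove G)
  rw [grundy] at h
  rw [h] at hmem
  exact hmem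

lemma tensor_coloring {α β : Type*} {G : SimpleGraph α} {H : SimpleGraph β} {k : ℕ}
    [NeZero k] {S : Fin k → Set α} (hS : IsGreedyColoring G k S)
    (hN : {x : β | ∃ y, H.Adj x y}.Nonempty) (hb : Nonempty β) :
    IsGreedyColoring (tensorProd G H) k
      (fun i => if i = 0 then {p | p.1 ∈ S 0 ∨ ¬ ∃ y, H.Adj p.2 y}
                else {p | p.1 ∈ S i ∧ ∃ y, H.Adj p.2 y}) := by
  obtain ⟨hpart, hnon, hstab, hdom⟩ := hS
  set U : Fin k → Set (α × β) := fun i => if i = 0 then {p | p.1 ∈ S 0 ∨ ¬ ∃ y, H.Adj p.2 y}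
                else {p | p.1 ∈ S i ∧ ∃ y, H.Adj p.2 y} with hU
  have hmem0 : ∀ p : α × β, p ∈ U 0 ↔ (p.1 ∈ S 0 ∨ ¬ ∃ y, H.Adj p.2 y) := by
    intro p; rw [hU]; simp
  have hmemne : ∀ i : Fin k, i ≠ 0 → ∀ p : α × β,
      p ∈ U i ↔ (p.1 ∈ S i ∧ ∃ y, H.Adj p.2 y) := by
    intro i hi p; rw [hU]; simp [hi]
  refine ⟨?_, ?_, ?_, ?_⟩
  · rintro ⟨v, x⟩
    by_cases hx : ∃ y, H.Adj x y
    · obtain ⟨i, hvi, huniq⟩ := hpart v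
      by_cases hi : i = 0
      · refine ⟨0, (hmem0 _).2 (Or.inl (hi ▸ hvi)), ?_⟩
        intro j hj
        by_cases hj0 : j = 0
        · exact hj0
        · rw [hmemne j hj0] at hj
          exact (huniq j hj.1).trans hi
      · refine ⟨i, (hmemne i hi _).2 ⟨hvi, hx⟩, ?_⟩
        intro j hj
        by_cases hj0 : j = 0
        · subst hj0
          rw [hmem0] at hj
          rcases hj with h0 | h0
          · exact absurd (huniq 0 h0) (fun h => hi h.symm)
          · exact absurd hx h0
        · rw [hmemne j hj0] at hj
          exact huniq j hj.1
    · refine ⟨0, (hmem0 _).2 (Or.inr hx), ?_⟩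
      intro j hj
      by_cases hj0 : j = 0
      · exact hj0
      · rw [hmemne j hj0] at hj
        exact absurd hj.2 hx
  · intro i
    by_cases hi : i = 0
    · obtain ⟨v, hv⟩ := hnon 0
      obtain ⟨x⟩ := hb
      exact ⟨(v, x), hi ▸ (hmem0 (v, x)).2 (Or.inl hv)⟩
    · obtain ⟨v, hv⟩ := hnon i
      obtain ⟨x, hx⟩ := hN
      exact ⟨(v, x), (hmemne i hi _).2 ⟨hv, hx⟩⟩
  · intro i p hp q hq hadj
    obtain ⟨h1, h2⟩ := hadj
    by_cases hi : i = 0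
    · subst hi
      rw [hmem0] at hp hq
      rcases hp with hp | hp
      · rcases hq with hq | hq
        · exact hstab 0 p.1 hp q.1 hq h1
        · exact hq ⟨p.2, h2.symm⟩
      · exact hp ⟨q.2, h2⟩
    · rw [hmemne i hi] at hp hq
      exact hstab i p.1 hp.1 q.1 hq.1 h1
  · intro i j hji p hp
    have hi : i ≠ 0 := by
      intro h
      rw [h] at hji
      exact absurd hji (by simp)
    rw [hmemne i hi] at hp
    obtain ⟨hpS, y, hy⟩ := hp
    obtain ⟨w, hw, hvw⟩ := hdom i j hji p.1 hpS
    refine ⟨(w, y), ?_, hvw, hy⟩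
    by_cases hj0 : j = 0
    · subst hj0
      exact (hmem0 _).2 (Or.inl hw)
    · exact (hmemne j hj0 _).2 ⟨hw, p.2, hy.symm⟩

lemma crown_coloring (k : ℕ) :
    IsGreedyColoring (tensorProd (⊤ : SimpleGraph (Fin k)) (⊤ : SimpleGraph (Fin 2))) k
      (fun i => {p | p.1 = i}) := by
  refine ⟨?_, ?_, ?_, ?_⟩
  · intro p
    exact ⟨p.1, rfl, fun j hj => hj.symm⟩
  · intro i
    exact ⟨(i, 0), rfl⟩
  · intro i p hp q hq hadj
    exact hadj.1 (hp.trans hq.symm)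
  · intro i j hji p hp
    refine ⟨(j, p.2 + 1), rfl, ?_, ?_⟩
    · show p.1 ≠ j
      rw [hp]
      exact (ne_of_lt hji).symm
    · show p.2 ≠ p.2 + 1
      have : ∀ b : Fin 2, b ≠ b + 1 := by decide
      exact this p.2

lemma crown_upper {k m : ℕ} {U : Fin m → Set (Fin k × Fin 2)}
    (h : IsGreedyColoring (tensorProd (⊤ : SimpleGraph (Fin k)) (⊤ : SimpleGraph (Fin 2))) m U) :
    m ≤ k := by
  by_contra hc
  push_neg at hc
  have hm : 0 < m := by omega
  set i₀ : Fin m := ⟨m - 1, by omega⟩ with hi₀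
  obtain ⟨p, hp⟩ := h.2.1 i₀
  have hw : ∀ j : Fin m, j ≠ i₀ →
      ∃ q, q ∈ U j ∧ (tensorProd (⊤ : SimpleGraph (Fin k)) (⊤ : SimpleGraph (Fin 2))).Adj p q := by
    intro j hj
    have hji : j < i₀ := by
      have : j.1 ≠ m - 1 := fun hh => hj (Fin.ext hh)
      have := j.2
      exact Fin.mk_lt_mk.mpr (by omega) |>.trans_le (le_refl _)
    obtain ⟨q, hq1, hq2⟩ := h.2.2.2 i₀ j hji p hp
    exact ⟨q, hq1, hq2⟩
  classical
  choose q hqmem hqadj using hw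
  let f : Fin m → Fin k := fun j => if hj : j = i₀ then p.1 else (q j hj).1
  have hfinj : Function.Injective f := by
    intro a b hab
    by_cases ha : a = i₀ <;> by_cases hb : b = i₀
    · rw [ha, hb]
    · exfalso
      have h1 : p.1 ≠ (q b hb).1 := (hqadj b hb).1
      apply h1
      simpa [f, ha, hb] using hab
    · exfalso
      have h1 : p.1 ≠ (q a ha).1 := (hqadj a ha).1
      apply h1
      simpa [f, ha, hb] using hab.symm
    · have h2 : (q a ha).2 = (q b hb).2 := by
        have hxa : p.2 ≠ (q a ha).2 := (hqadj a ha).2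
        have hxb : p.2 ≠ (q b hb).2 := (hqadj b hb).2
        have : ∀ x y z : Fin 2, z ≠ x → z ≠ y → x = y := by decide
        exact this _ _ _ hxa hxb
      have h1 : (q a ha).1 = (q b hb).1 := by simpa [f, ha, hb] using hab
      have heq : q a ha = q b hb := Prod.ext h1 h2
      obtain ⟨i, hi, huniq⟩ := h.1 (q a ha)
      have e1 := huniq a (hqmem a ha)
      have e2 := huniq b (heq ▸ hqmem b hb)
      rw [e1, e2]
  have hcard := Fintype.card_le_of_injective f hfinj
  simp at hcard
  omega

lemma grundy_top (n : ℕ) : grundy (⊤ : SimpleGraph (Fin n)) = n := by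
  have hmem : n ∈ {k | ∃ S : Fin k → Set (Fin n), IsGreedyColoring (⊤ : SimpleGraph (Fin n)) k S} := by
    refine ⟨fun i => {v | v = i}, ?_, ?_, ?_, ?_⟩
    · intro v
      exact ⟨v, rfl, fun j hj => hj.symm⟩
    · intro i
      exact ⟨i, rfl⟩
    · intro i v hv w hw hadj
      exact hadj (hv.trans hw.symm)
    · intro i j hji v hv
      exact ⟨j, rfl, by rw [hv]; exact (ne_of_lt hji).symm⟩
  apply le_antisymm
  · exact csSup_le ⟨n, hmem⟩ (fun m ⟨S, hS⟩ => by simpa using greedy_le_card hS)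
  · exact le_csSup (greedy_bddAbove _) hmem

/-- For every `k ≥ 2`: (i) `Γ(K_k × K_2) = k`; (ii) for all finite graphs `G`, `H` with
`Γ(G) = k` and `Γ(H) = 2`, `Γ(G × H) ≥ k`.  Consequently
`min {Γ(G × H) : Γ(G) = k, Γ(H) = 2} = k`. -/
theorem grundy_tensorProd_min (k : ℕ) (hk : 2 ≤ k) :
    grundy (tensorProd (⊤ : SimpleGraph (Fin k)) (⊤ : SimpleGraph (Fin 2))) = k ∧
    (∀ {α β : Type} [Fintype α] [Fintype β] (G : SimpleGraph α) (H : SimpleGraph β),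
      grundy G = k → grundy H = 2 → grundy (tensorProd G H) ≥ k) ∧
    IsLeast {m : ℕ | ∃ (α β : Type) (instα : Fintype α) (instβ : Fintype β)
      (G : SimpleGraph α) (H : SimpleGraph β),
      @grundy α instα G = k ∧ @grundy β instβ H = 2 ∧
      @grundy (α × β) (@instFintypeProd α β instα instβ) (tensorProd G H) = m} k := by
  have hcrown : grundy (tensorProd (⊤ : SimpleGraph (Fin k)) (⊤ : SimpleGraph (Fin 2))) = k := by
    apply le_antisymm
    · exact csSup_le ⟨k, _, crown_coloring k⟩ (fun m ⟨U, hU⟩ => crown_upper hU)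
    · exact le_csSup (greedy_bddAbove _) ⟨_, crown_coloring k⟩
  have hpart2 : ∀ {α β : Type} [Fintype α] [Fintype β] (G : SimpleGraph α) (H : SimpleGraph β),
      grundy G = k → grundy H = 2 → grundy (tensorProd G H) ≥ k := by
    intro α β _ _ G H hG hH
    obtain ⟨S, hS⟩ := exists_of_grundy hG (by omega)
    obtain ⟨T, hT⟩ := exists_of_grundy hH (by omega)
    have hN : {x : β | ∃ y, H.Adj x y}.Nonempty := by
      obtain ⟨x, hx⟩ := hT.2.1 1
      obtain ⟨y, -, hy⟩ := hT.2.2.2 1 0 (by decide) x hx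
      exact ⟨x, y, hy⟩
    have hb : Nonempty β := ⟨hN.choose⟩
    haveI : NeZero k := ⟨by omega⟩
    exact le_csSup (greedy_bddAbove _) ⟨_, tensor_coloring hS hN hb⟩
  refine ⟨hcrown, hpart2, ?_, ?_⟩
  · exact ⟨Fin k, Fin 2, inferInstance, inferInstance, ⊤, ⊤, grundy_top k, grundy_top 2, hcrown⟩
  · rintro m ⟨α, β, instα, instβ, G, H, hG, hH, hm⟩
    exact hm ▸ hpart2 G H hG hH
end

section
/- Let G and H be finite graphs and let u and v be distinct vertices of G with N_G(u) = N_G(v) (the same open neighborhoods). Then Γ(G × H) = Γ((G − u) × H), where G − u is the induced subgraph of G obtained by deleting u. -/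
open SimpleGraph

lemma tensorProd_adj {α β : Type*} (G : SimpleGraph α) (H : SimpleGraph β)
    (p q : α × β) : (tensorProd G H).Adj p q ↔ G.Adj p.1 q.1 ∧ H.Adj p.2 q.2 := Iff.rfl

/-- If `u ≠ v` are vertices of `G` with the same open neighborhood, then
`Γ(G × H) = Γ((G − u) × H)`. -/
theorem grundy_tensorProd_deleteVertex {α β : Type*} [Fintype α] [Fintype β]
    [DecidableEq α] (G : SimpleGraph α) (H : SimpleGraph β) (u v : α)
    (huv : u ≠ v) (hN : G.neighborSet u = G.neighborSet v) :
    grundy (tensorProd G H) =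
      grundy (tensorProd (G.induce {w : α | w ≠ u}) H) := by
  have hvu : v ≠ u := huv.symm
  have hadj : ∀ a, G.Adj u a ↔ G.Adj v a := fun a => by
    have := Set.ext_iff.mp hN a
    simpa [mem_neighborSet] using this
  have hvmem : v ∈ {w : α | w ≠ u} := hvu
  have hindadj : ∀ (p q : ({w : α | w ≠ u} × β)),
      (tensorProd (G.induce {w : α | w ≠ u}) H).Adj p q ↔
        G.Adj p.1.1 q.1.1 ∧ H.Adj p.2 q.2 := by
    intro p q
    rw [tensorProd_adj]
    simp [SimpleGraph.comap]
  unfold grundy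
  congr 1
  ext k
  simp only [Set.mem_setOf_eq]
  constructor
  · rintro ⟨T, hpart, hne, hstab, hgreedy⟩
    -- twin lemma: (u,x) and (v,x) lie in the same class
    have twin : ∀ (x : β) (i : Fin k), (u, x) ∈ T i → (v, x) ∈ T i := by
      intro x i hu
      obtain ⟨j, hj, -⟩ := hpart (v, x)
      rcases lt_trichotomy i j with hij | hij | hij
      · obtain ⟨w, hw, haw⟩ := hgreedy j i hij (v, x) hj
        rw [tensorProd_adj] at haw
        have : (tensorProd G H).Adj (u, x) w := ⟨(hadj w.1).mpr haw.1, haw.2⟩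
        exact absurd this (hstab i (u, x) hu w hw)
      · rwa [hij]
      · obtain ⟨w, hw, haw⟩ := hgreedy i j hij (u, x) hu
        rw [tensorProd_adj] at haw
        have : (tensorProd G H).Adj (v, x) w := ⟨(hadj w.1).mp haw.1, haw.2⟩
        exact absurd this (hstab j (v, x) hj w hw)
    refine ⟨fun i => {q | (q.1.1, q.2) ∈ T i}, ?_, ?_, ?_, ?_⟩
    · intro q
      obtain ⟨i, hi, hiu⟩ := hpart (q.1.1, q.2)
      exact ⟨i, hi, fun j hj => hiu j hj⟩
    · intro i
      obtain ⟨p, hp⟩ := hne i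
      by_cases h : p.1 = u
      · refine ⟨(⟨v, hvmem⟩, p.2), ?_⟩
        apply twin
        have : p = (u, p.2) := by rw [Prod.ext_iff]; exact ⟨h, rfl⟩
        rwa [← this]
      · exact ⟨(⟨p.1, h⟩, p.2), by simpa using hp⟩
    · intro i q1 hq1 q2 hq2 hadj'
      rw [hindadj] at hadj'
      exact hstab i _ hq1 _ hq2 hadj'
    · intro i j hij q hq
      obtain ⟨p, hp, hap⟩ := hgreedy i j hij (q.1.1, q.2) hq
      rw [tensorProd_adj] at hap
      by_cases h : p.1 = u
      · have hvp : (v, p.2) ∈ T j := by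
          apply twin
          have : p = (u, p.2) := by rw [Prod.ext_iff]; exact ⟨h, rfl⟩
          rwa [← this]
        refine ⟨(⟨v, hvmem⟩, p.2), hvp, ?_⟩
        rw [hindadj]
        refine ⟨?_, hap.2⟩
        have := hap.1
        rw [h] at this
        exact ((hadj q.1.1).mp (G.adj_symm this)).symm
      · refine ⟨(⟨p.1, h⟩, p.2), by simpa using hp, ?_⟩
        rw [hindadj]
        exact hap
  · rintro ⟨S, hpart, hne, hstab, hgreedy⟩
    have hne' : ∀ p : α × β, p.1 ≠ u → (if p.1 = u then v else p.1) ≠ u := by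
      intro p h; simp [h]
    set f : α × β → ({w : α | w ≠ u} × β) := fun p =>
      (⟨if p.1 = u then v else p.1, by show (if p.1 = u then v else p.1) ≠ u; split <;> [exact hvu; assumption]⟩, p.2) with hf
    have hf1 : ∀ p : α × β, (f p).1.1 = if p.1 = u then v else p.1 := fun p => rfl
    have hf2 : ∀ p : α × β, (f p).2 = p.2 := fun p => rfl
    have hfid : ∀ q : ({w : α | w ≠ u} × β), f (q.1.1, q.2) = q := by
      intro q
      have hq : q.1.1 ≠ u := q.1.2
      rw [hf]
      ext
      · simp [hq]
      · rfl
    -- adjacency transfers forward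
    have hfwd : ∀ p q : α × β, (tensorProd G H).Adj p q →
        (tensorProd (G.induce {w : α | w ≠ u}) H).Adj (f p) (f q) := by
      intro p q h
      rw [tensorProd_adj] at h
      rw [hindadj, hf1, hf1, hf2, hf2]
      refine ⟨?_, h.2⟩
      by_cases hp : p.1 = u <;> by_cases hq : q.1 = u <;> simp [hp, hq]
      · rw [hp, hq] at h; exact absurd h.1 (G.loopless.irrefl u)
      · rw [hp] at h; exact (hadj q.1).mp h.1
      · rw [hq] at h; exact ((hadj p.1).mp (G.adj_symm h.1)).symm
      · exact h.1
    -- adjacency transfers backward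
    have hbwd : ∀ (p : α × β) (r : ({w : α | w ≠ u} × β)),
        (tensorProd (G.induce {w : α | w ≠ u}) H).Adj (f p) r →
        (tensorProd G H).Adj p (r.1.1, r.2) := by
      intro p r h
      rw [hindadj, hf1, hf2] at h
      rw [tensorProd_adj]
      refine ⟨?_, h.2⟩
      by_cases hp : p.1 = u
      · show G.Adj p.1 r.1.1
        rw [hp]
        rw [if_pos hp] at h
        exact (hadj r.1.1).mpr h.1
      · show G.Adj p.1 r.1.1
        rw [if_neg hp] at h
        exact h.1
    refine ⟨fun i => f ⁻¹' (S i), ?_, ?_, ?_, ?_⟩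
    · intro p
      obtain ⟨i, hi, hiu⟩ := hpart (f p)
      exact ⟨i, hi, fun j hj => hiu j hj⟩
    · intro i
      obtain ⟨q, hq⟩ := hne i
      exact ⟨(q.1.1, q.2), by simp [Set.mem_preimage, hfid q, hq]⟩
    · intro i p1 hp1 p2 hp2 h
      exact hstab i _ hp1 _ hp2 (hfwd p1 p2 h)
    · intro i j hij p hp
      obtain ⟨r, hr, har⟩ := hgreedy i j hij (f p) hp
      refine ⟨(r.1.1, r.2), ?_, hbwd p r har⟩
      simp [Set.mem_preimage, hfid r, hr]
end
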